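/- arXiv:2008.06740 — 4 statements merged into one kernel-verified Lean document; each statement's English description precedes it below -/
import Mathlib

section
/- Let C be a shortest even hole of a graph G, let u and v be distinct vertices of C, and let the uv-path P of G be a C-shallow worst C-shortcut. Then every uv-path P_uv of G satisfies ‖P‖ ≤ ‖P_uv‖. -/
open SimpleGraph

variable {V : Type*}

/-- The vertex set of a walk. -/
def suppSet {G : SimpleGraph V} {u v : V} (w : G.Walk u v) : Set V :=
  {x | x ∈ w.support}

/-- An induced cycle of `G`. -/
def IsInducedCycle (G : SimpleGraph V) {r : V} (w : G.Walk r r) : Prop :=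
  w.IsCycle ∧ ∀ a b : V, a ∈ w.support → b ∈ w.support → G.Adj a b → s(a, b) ∈ w.edges

/-- A hole of `G`: an induced cycle with at least 4 vertices. -/
def IsHole (G : SimpleGraph V) {r : V} (w : G.Walk r r) : Prop :=
  IsInducedCycle G w ∧ 4 ≤ w.length

/-- An even hole of `G`. -/
def IsEvenHole (G : SimpleGraph V) {r : V} (w : G.Walk r r) : Prop :=
  IsHole G w ∧ Even w.length

/-- A shortest even hole of `G`. -/
def IsShortestEvenHole (G : SimpleGraph V) {r : V} (w : G.Walk r r) : Prop :=
  IsEvenHole G w ∧ ∀ (y : V) (w' : G.Walk y y), IsEvenHole G w' → w.length ≤ w'.length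

/-- `P` is a path of `G` all of whose edges lie on the walk `c`
(used for "a `uv`-path of `C`"). -/
def IsPathOf (G : SimpleGraph V) {p q u v : V} (c : G.Walk p q) (P : G.Walk u v) : Prop :=
  P.IsPath ∧ ∀ e ∈ P.edges, e ∈ c.edges

/-- The distance `d_C(u,v)` between `u` and `v` within the cycle `c`. -/
noncomputable def cycleDist (G : SimpleGraph V) {r : V} (c : G.Walk r r) (u v : V) : ℕ :=
  sInf {n | ∃ P : G.Walk u v, IsPathOf G c P ∧ P.length = n}

/-- The induced subgraph `G[S]` is a hole of `G`. -/
def IsHoleOn (G : SimpleGraph V) (S : Set V) : Prop :=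
  ∃ (r : V) (w : G.Walk r r), IsHole G w ∧ suppSet w = S

/-- The induced subgraph `G[S]` is an even hole of `G`. -/
def IsEvenHoleOn (G : SimpleGraph V) (S : Set V) : Prop :=
  ∃ (r : V) (w : G.Walk r r), IsEvenHole G w ∧ suppSet w = S

/-- The induced subgraph `G[S]` is a shortest even hole of `G`. -/
def IsShortestEvenHoleOn (G : SimpleGraph V) (S : Set V) : Prop :=
  ∃ (r : V) (w : G.Walk r r), IsShortestEvenHole G w ∧ suppSet w = S

/-- `P` is `C`-good: the union of `P` and one of the two `uv`-paths of `C`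
is again a shortest even hole of `G`. -/
def CGood (G : SimpleGraph V) {r u v : V} (c : G.Walk r r) (P : G.Walk u v) : Prop :=
  ∃ Q : G.Walk u v, IsPathOf G c Q ∧ IsShortestEvenHoleOn G (suppSet P ∪ suppSet Q)

/-- The standing assumptions for `C`-shortcuts: `P` is a `uv`-path of `G` for distinct
nonadjacent vertices `u`, `v` of `C`. -/
def ShortcutSetup (G : SimpleGraph V) {r u v : V} (c : G.Walk r r) (P : G.Walk u v) : Prop :=
  P.IsPath ∧ u ≠ v ∧ ¬G.Adj u v ∧ u ∈ c.support ∧ v ∈ c.support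

/-- `P` is a `C`-shortcut: `2 ≤ ‖P‖ ≤ d_C(u,v)` and `‖P‖ < ‖C‖/4`. -/
def CShortcut (G : SimpleGraph V) {r u v : V} (c : G.Walk r r) (P : G.Walk u v) : Prop :=
  2 ≤ P.length ∧ P.length ≤ cycleDist G c u v ∧ 4 * P.length < c.length

/-- `C1` and `C2` are the two `uv`-paths of the cycle `c`. -/
def ArcPair (G : SimpleGraph V) {r u v : V} (c : G.Walk r r) (C1 C2 : G.Walk u v) : Prop :=
  IsPathOf G c C1 ∧ IsPathOf G c C2 ∧ C1.length + C2.length = c.length ∧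
    ∀ e ∈ c.edges, e ∈ C1.edges ∨ e ∈ C2.edges

/-- `P` is `C`-shallow: `‖P‖ ≥ d_C(u,v) − 1` and `G[P ∪ C2]` is a hole, where `C2` is the
longer of the two `uv`-paths of `C`. -/
def CShallow (G : SimpleGraph V) {r u v : V} (c : G.Walk r r) (P : G.Walk u v) : Prop :=
  cycleDist G c u v - 1 ≤ P.length ∧
    ∀ C1 C2 : G.Walk u v, ArcPair G c C1 C2 → C1.length ≤ C2.length →
      IsHoleOn G (suppSet P ∪ suppSet C2)

/-- `P` is a worst `C`-shortcut. -/
def WorstCShortcut (G : SimpleGraph V) {r u v : V} (c : G.Walk r r) (P : G.Walk u v) : Prop :=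
  ShortcutSetup G c P ∧ CShortcut G c P ∧ ¬CGood G c P ∧
    ∀ (u' v' : V) (P' : G.Walk u' v'),
      ShortcutSetup G c P' → CShortcut G c P' → ¬CGood G c P' →
        (P.length < P'.length ∨
          (P.length = P'.length ∧ cycleDist G c u' v' ≤ cycleDist G c u v))

/-- `C` is good in `G`: every `C`-shortcut is `C`-good. -/
def GoodHole (G : SimpleGraph V) {r : V} (c : G.Walk r r) : Prop :=
  ∀ (u v : V) (P : G.Walk u v), ShortcutSetup G c P → CShortcut G c P → CGood G c P

/-- `P` is a shortest `uv`-path of `G`. -/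
def IsShortestPath (G : SimpleGraph V) {u v : V} (P : G.Walk u v) : Prop :=
  P.IsPath ∧ ∀ Q : G.Walk u v, P.length ≤ Q.length

/-- The closed neighborhood `N_G[S]` of a vertex set `S`. -/
def closedNbhd (G : SimpleGraph V) (S : Set V) : Set V :=
  S ∪ {x | ∃ y ∈ S, G.Adj y x}

/-- The subgraph of `G` induced on `S` (kept on the same vertex type: edges of `G`
with both ends in `S`). -/
def restrictTo (G : SimpleGraph V) (S : Set V) : SimpleGraph V where
  Adj a b := G.Adj a b ∧ a ∈ S ∧ b ∈ S
  symm := ⟨fun a b h => ⟨h.1.symm, h.2.2, h.2.1⟩⟩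
  loopless := ⟨fun a h => G.loopless.irrefl a h.1⟩

/-- The vertex set of `H(u,v,x,y) = G[(V(G) \ N_G[V(P_uv ∪ P_xy) \ {u,v}]) ∪ {u,v}]`. -/
def Hverts (G : SimpleGraph V) {u v a b : V} (Puv : G.Walk u v) (Pxy : G.Walk a b) : Set V :=
  (Set.univ \ closedNbhd G ((suppSet Puv ∪ suppSet Pxy) \ {u, v})) ∪ {u, v}

/-- The graph `H(u,v,x,y)`. -/
def Hgraph (G : SimpleGraph V) {u v a b : V} (Puv : G.Walk u v) (Pxy : G.Walk a b) :
    SimpleGraph V :=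
  restrictTo G (Hverts G Puv Pxy)

/-- `G` is shallow. -/
def ShallowGraph (G : SimpleGraph V) : Prop :=
  ∃ (r : V) (c : G.Walk r r), IsShortestEvenHole G c ∧
    ∀ (u v : V) (P : G.Walk u v), WorstCShortcut G c P → CShallow G c P

/-- `G` is anti-shallow. -/
def AntiShallowGraph (G : SimpleGraph V) : Prop :=
  ∀ (r : V) (c : G.Walk r r), IsShortestEvenHole G c → ¬GoodHole G c →
    ∀ (u v : V) (P : G.Walk u v), WorstCShortcut G c P → ¬CShallow G c P

/-- The induced subgraph `G[S]` is a path with end-vertices `u` and `v`. -/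
def IsInducedPathOn (G : SimpleGraph V) (u v : V) (S : Set V) : Prop :=
  ∃ Q : G.Walk u v, Q.IsPath ∧ suppSet Q = S ∧
    ∀ a b : V, a ∈ S → b ∈ S → G.Adj a b → s(a, b) ∈ Q.edges


section Aux

variable {G : SimpleGraph V}

lemma two_le_length_of_ne_of_not_adj {u v : V} (hne : u ≠ v) (hna : ¬G.Adj u v)
    (p : G.Walk u v) : 2 ≤ p.length := by
  by_contra hlt
  have h01 : p.length = 0 ∨ p.length = 1 := by omega
  rcases h01 with h | h
  · exact hne (Walk.eq_of_length_eq_zero h)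
  · exact hna (Walk.adj_of_length_eq_one h)

lemma first_edge_of_path {u w y : V} (p : G.Walk u y) (hp : p.IsPath)
    (he : s(u, w) ∈ p.edges) : ∃ (h : G.Adj u w) (p₁ : G.Walk w y), p = Walk.cons h p₁ := by
  cases p with
  | nil => simp at he
  | cons h' p₁ =>
    rw [Walk.edges_cons, List.mem_cons] at he
    rcases he with he | he
    · obtain rfl := Sym2.congr_right.mp he
      exact ⟨h', p₁, rfl⟩
    · exact absurd (p₁.fst_mem_support_of_mem_edges he)
        ((Walk.cons_isPath_iff h' p₁).mp hp).2

lemma path_compl : ∀ {w v : V} (q : G.Walk w v) {b : V} (p : G.Walk w b), q.IsPath → p.IsPath →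
    (∀ e ∈ q.edges, e ∈ p.edges) →
    ∃ q' : G.Walk v b, q'.IsPath ∧ (∀ e ∈ q'.edges, e ∈ p.edges) ∧
      q.length + q'.length = p.length := by
  intro w v q
  induction q with
  | nil =>
    intro b p hq hp hsub
    exact ⟨p, hp, fun e he => he, by simp⟩
  | @cons w x v h q₁ ih =>
    intro b p hq hp hsub
    obtain ⟨h', p₁, rfl⟩ := first_edge_of_path p hp (hsub s(w, x) (by simp))
    have hw : w ∉ q₁.support := ((Walk.cons_isPath_iff h q₁).mp hq).2
    have hsub₁ : ∀ e ∈ q₁.edges, e ∈ p₁.edges := by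
      intro e he
      have h2 := hsub e (by simp [he])
      rw [Walk.edges_cons, List.mem_cons] at h2
      rcases h2 with rfl | h2
      · exact absurd (q₁.fst_mem_support_of_mem_edges he) hw
      · exact h2
    obtain ⟨q', hq', hsub', hlen⟩ := ih p₁ hq.of_cons hp.of_cons hsub₁
    refine ⟨q', hq', fun e he => by simp [hsub' e he], ?_⟩
    simp only [Walk.length_cons]
    omega

lemma isCycle_reverse {u : V} {c : G.Walk u u} (hc : c.IsCycle) : c.reverse.IsCycle := by
  obtain ⟨htr, hn, hnd⟩ := (Walk.isCycle_def _).mp hc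
  cases c with
  | nil => exact absurd rfl hn
  | cons h p =>
    rw [Walk.isCycle_def]
    refine ⟨(Walk.reverse_isTrail_iff _).mpr htr, ?_, ?_⟩
    · intro hcon
      apply hn
      have := congrArg Walk.reverse hcon
      rwa [Walk.reverse_reverse, Walk.reverse_nil] at this
    · rw [Walk.support_reverse]
      have hnd' : p.support.Nodup := by simpa using hnd
      have hne : p.support ≠ [] := p.support_ne_nil
      have hds : p.support.dropLast ++ [u] = p.support := by
        conv_rhs => rw [← List.dropLast_append_getLast hne]
        rw [p.getLast_support]
      have hrev : p.support.reverse = u :: p.support.dropLast.reverse := by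
        rw [← hds, List.reverse_append]
        simp
      have hgoal : ((Walk.cons h p).support.reverse).tail
          = p.support.dropLast.reverse ++ [u] := by
        rw [Walk.support_cons, List.reverse_cons, hrev]
        simp
      rw [hgoal]
      have hperm : List.Perm (p.support.dropLast ++ [u]) (p.support.dropLast.reverse ++ [u]) :=
        (List.reverse_perm p.support.dropLast).symm.append_right [u]
      exact hperm.nodup (by rw [hds]; exact hnd')

lemma cycle_compl_aux {u w v : V} (h : G.Adj u w) (c₁ : G.Walk w u) (Q₁ : G.Walk w v)
    (hc : (Walk.cons h c₁).IsCycle) (hQ : (Walk.cons h Q₁).IsPath)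
    (hsub : ∀ e ∈ Q₁.edges, e ∈ c₁.edges) :
    ∃ Q' : G.Walk u v, Q'.IsPath ∧ (∀ e ∈ Q'.edges, e ∈ c₁.edges) ∧
      (Walk.cons h Q₁).length + Q'.length = (Walk.cons h c₁).length := by
  obtain ⟨htr, hn, hnd⟩ := (Walk.isCycle_def _).mp hc
  have hc₁ : c₁.IsPath := Walk.IsPath.mk' (by simpa using hnd)
  obtain ⟨q', hq', hsub', hlen⟩ := path_compl Q₁ c₁ hQ.of_cons hc₁ hsub
  refine ⟨q'.reverse, hq'.reverse, ?_, ?_⟩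
  · intro e he
    rw [Walk.edges_reverse, List.mem_reverse] at he
    exact hsub' e he
  · simp only [Walk.length_cons, Walk.length_reverse]
    omega

lemma cycle_compl {u v : V} (c' : G.Walk u u) (hc : c'.IsCycle) (Q : G.Walk u v)
    (hQ : Q.IsPath) (hvu : v ≠ u) (hsub : ∀ e ∈ Q.edges, e ∈ c'.edges) :
    ∃ Q' : G.Walk u v, Q'.IsPath ∧ (∀ e ∈ Q'.edges, e ∈ c'.edges) ∧
      Q.length + Q'.length = c'.length := by
  cases Q with
  | nil => exact absurd rfl hvu
  | @cons _ w _ h Q₁ =>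
    cases c' with
    | nil => exact absurd rfl hc.ne_nil
    | @cons _ w₁ _ h₁ c₁ =>
      have he : s(u, w) ∈ (Walk.cons h₁ c₁).edges := hsub _ (by simp)
      rw [Walk.edges_cons, List.mem_cons] at he
      have hwQ : u ∉ Q₁.support := ((Walk.cons_isPath_iff h Q₁).mp hQ).2
      rcases he with heq | hmem
      · obtain rfl := Sym2.congr_right.mp heq
        have hsub₁ : ∀ e ∈ Q₁.edges, e ∈ c₁.edges := by
          intro e he2
          have h2 := hsub e (by simp [he2])
          rw [Walk.edges_cons, List.mem_cons] at h2
          rcases h2 with rfl | h2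
          · exact absurd (Q₁.fst_mem_support_of_mem_edges he2) hwQ
          · exact h2
        obtain ⟨Q', hQ'p, hQ's, hQ'l⟩ := cycle_compl_aux h₁ c₁ Q₁ hc hQ hsub₁
        exact ⟨Q', hQ'p, fun e he2 => by simp [hQ's e he2], hQ'l⟩
      · obtain ⟨htr, hn, hnd⟩ := (Walk.isCycle_def _).mp hc
        have hc₁ : c₁.IsPath := Walk.IsPath.mk' (by simpa using hnd)
        have he' : s(u, w) ∈ c₁.reverse.edges := by
          rw [Walk.edges_reverse, List.mem_reverse]; exact hmem
        obtain ⟨h₂, p₁, hrev⟩ := first_edge_of_path c₁.reverse hc₁.reverse he'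
        have hc'rev : (Walk.cons h₁ c₁).reverse
            = Walk.cons h₂ (p₁.append (Walk.cons h₁.symm Walk.nil)) := by
          rw [Walk.reverse_cons, hrev, Walk.cons_append]
        set c₃ := p₁.append (Walk.cons h₁.symm Walk.nil) with hc₃
        have hcyc3 : (Walk.cons h₂ c₃).IsCycle := hc'rev ▸ isCycle_reverse hc
        have hsub3 : ∀ e ∈ Q₁.edges, e ∈ c₃.edges := by
          intro e he2
          have h3 : e ∈ (Walk.cons h₂ c₃).edges := by
            rw [← hc'rev, Walk.edges_reverse, List.mem_reverse]
            exact hsub e (by simp [he2])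
          rw [Walk.edges_cons, List.mem_cons] at h3
          rcases h3 with rfl | h3
          · exact absurd (Q₁.fst_mem_support_of_mem_edges he2) hwQ
          · exact h3
        obtain ⟨Q', hQ'p, hQ's, hQ'l⟩ := cycle_compl_aux h₂ c₃ Q₁ hcyc3 hQ hsub3
        refine ⟨Q', hQ'p, ?_, ?_⟩
        · intro e he2
          have h3 : e ∈ (Walk.cons h₂ c₃).edges := by simp [hQ's e he2]
          rw [← hc'rev, Walk.edges_reverse, List.mem_reverse] at h3
          exact h3
        · have hlenrev : (Walk.cons h₂ c₃).length = (Walk.cons h₁ c₁).length := by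
            rw [← hc'rev, Walk.length_reverse]
          omega

lemma suppSet_eq_coe_toFinset [DecidableEq V] {a b : V} (w : G.Walk a b) :
    suppSet w = ↑w.support.toFinset := by
  ext x; simp [suppSet]

lemma cycle_ncard_suppSet {r' : V} {w : G.Walk r' r'} (hc : w.IsCycle) :
    (suppSet w).ncard = w.length := by
  classical
  obtain ⟨htr, hn, hnd⟩ := (Walk.isCycle_def _).mp hc
  cases w with
  | nil => exact absurd rfl hn
  | cons h p =>
    have hnd' : p.support.Nodup := by simpa using hnd
    have hmem : r' ∈ p.support := p.end_mem_support
    have hset : suppSet (Walk.cons h p) = ↑p.support.toFinset := by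
      ext x
      simp only [suppSet, Set.mem_setOf_eq, Walk.support_cons, List.mem_cons,
        Finset.coe_sort_coe, Finset.mem_coe, List.mem_toFinset]
      constructor
      · rintro (rfl | hx)
        · exact hmem
        · exact hx
      · exact fun hx => Or.inr hx
    rw [hset, Set.ncard_coe_finset, List.toFinset_card_of_nodup hnd']
    have := p.length_support
    simp only [Walk.length_cons]
    omega

end Aux

theorem stmt2 (G : SimpleGraph V) {r u v : V} (c : G.Walk r r)
    (hC : IsShortestEvenHole G c) (P : G.Walk u v)
    (hworst : WorstCShortcut G c P) (hshallow : CShallow G c P) :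
    ∀ Puv : G.Walk u v, Puv.IsPath → P.length ≤ Puv.length := by
  classical
  intro Puv hPuv
  by_contra hlt
  push_neg at hlt
  obtain ⟨⟨hPpath, huv, hnadj, hu, hv⟩, ⟨hP2, hPd, hP4⟩, hbad, hmin⟩ := hworst
  have h2 : 2 ≤ Puv.length := two_le_length_of_ne_of_not_adj huv hnadj Puv
  have hsetup' : ShortcutSetup G c Puv := ⟨hPuv, huv, hnadj, hu, hv⟩
  have hshort' : CShortcut G c Puv := ⟨h2, by omega, by omega⟩
  have hgood : CGood G c Puv := by
    by_contra hng
    rcases hmin u v Puv hsetup' hshort' hng with h | ⟨h, _⟩ <;> omega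
  obtain ⟨Q, ⟨hQpath, hQsub⟩, r', w₁, ⟨hw₁hole, hw₁min⟩, hsuppeq⟩ := hgood
  have hcyc1 : w₁.IsCycle := hw₁hole.1.1.1
  have hlen1 : w₁.length = c.length := le_antisymm (hw₁min r c hC.1) (hC.2 r' w₁ hw₁hole)
  -- cardinality bound : c.length ≤ Puv.length + Q.length
  set A := Puv.support.toFinset with hA
  set B := Q.support.toFinset with hB
  have hUAB : suppSet Puv ∪ suppSet Q = ↑(A ∪ B) := by
    rw [suppSet_eq_coe_toFinset, suppSet_eq_coe_toFinset, Finset.coe_union]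
  have hw₁card : (A ∪ B).card = c.length := by
    have := cycle_ncard_suppSet hcyc1
    rw [hsuppeq, hUAB, Set.ncard_coe_finset] at this
    omega
  have hAcard : A.card = Puv.length + 1 := by
    rw [hA, List.toFinset_card_of_nodup hPuv.support_nodup, Walk.length_support]
  have hBcard : B.card = Q.length + 1 := by
    rw [hB, List.toFinset_card_of_nodup hQpath.support_nodup, Walk.length_support]
  have hpairsub : ({u, v} : Finset V) ⊆ A ∩ B := by
    intro x hx
    rw [Finset.mem_insert, Finset.mem_singleton] at hx
    rcases hx with rfl | rfl
    · exact Finset.mem_inter.mpr ⟨List.mem_toFinset.mpr Puv.start_mem_support,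
        List.mem_toFinset.mpr Q.start_mem_support⟩
    · exact Finset.mem_inter.mpr ⟨List.mem_toFinset.mpr Puv.end_mem_support,
        List.mem_toFinset.mpr Q.end_mem_support⟩
  have hinter : 2 ≤ (A ∩ B).card := by
    have := Finset.card_le_card hpairsub
    rwa [Finset.card_pair huv] at this
  have hcui := Finset.card_union_add_card_inter A B
  have hkey : c.length ≤ Puv.length + Q.length := by omega
  -- complement path of Q in the cycle c
  have hccyc : c.IsCycle := hC.1.1.1.1
  have hrot : (c.rotate u hu).IsCycle := hccyc.rotate hu
  have hQsub' : ∀ e ∈ Q.edges, e ∈ (c.rotate u hu).edges := fun e he =>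
    ((c.rotate_edges u hu).mem_iff).mpr (hQsub e he)
  obtain ⟨Q', hQ'path, hQ'sub, hQ'len⟩ := cycle_compl (c.rotate u hu) hrot Q hQpath huv.symm hQsub'
  have hrotlen : (c.rotate u hu).length = c.length := by
    have h1 := (c.rotate_edges u hu).perm.length_eq
    rwa [Walk.length_edges, Walk.length_edges] at h1
  have hdQ' : cycleDist G c u v ≤ Q'.length :=
    Nat.sInf_le ⟨Q', ⟨hQ'path, fun e he => ((c.rotate_edges u hu).mem_iff).mp (hQ'sub e he)⟩, rfl⟩
  omega
end

section
/- Let C be a shortest even hole of a graph G, let u and v be distinct vertices of C, let the uv-path P of G be a C-shallow worst C-shortcut, and let C1, C2 be the uv-paths of C with ‖C1‖ < ‖C2‖. Then every uv-path P_uv of G with ‖P_uv‖ = ‖P‖ satisfies that G[P_uv ∪ C2] is a hole of G. -/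
open SimpleGraph

variable {V : Type*}

section Helpers

set_option linter.unusedSectionVars false
set_option maxHeartbeats 1000000

variable {G : SimpleGraph V} [DecidableEq V]

lemma path_loop_nil {v : V} (p : G.Walk v v) (hp : p.IsPath) : p = Walk.nil := by
  cases p with
  | nil => rfl
  | cons h q =>
    exfalso
    have := hp.support_nodup
    simp only [Walk.support_cons, List.nodup_cons] at this
    exact this.1 q.end_mem_support

lemma path_head_nbr_unique {a b x y : V} (p : G.Walk a b) (hp : p.IsPath)
    (hx : s(a,x) ∈ p.edges) (hy : s(a,y) ∈ p.edges) : x = y := by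
  cases p with
  | nil => simp at hx
  | cons h q =>
    rename_i w
    rw [Walk.edges_cons, List.mem_cons] at hx hy
    rw [Walk.cons_isPath_iff] at hp
    have key : ∀ z : V, s(a,z) = s(a,w) ∨ s(a,z) ∈ q.edges → z = w := by
      intro z hz
      rcases hz with h1 | h2
      · exact Sym2.congr_right.mp h1
      · exact absurd (q.fst_mem_support_of_mem_edges h2) hp.2
    rw [key x hx, key y hy]

lemma edge_mem_of_length_one {a b : V} (w : G.Walk a b) (h : w.length = 1) :
    s(a,b) ∈ w.edges := by
  cases w with
  | nil => simp at h
  | cons hadj q =>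
    have : q.length = 0 := by simpa using h
    have hb := Walk.eq_of_length_eq_zero this
    subst hb
    simp

lemma cycle_two_nbrs_head {z a b d : V} (c : G.Walk z z) (hc : c.IsCycle)
    (ha : s(z,a) ∈ c.edges) (hb : s(z,b) ∈ c.edges) (hd : s(z,d) ∈ c.edges) :
    a = b ∨ a = d ∨ b = d := by
  cases c with
  | nil => simp at ha
  | cons h q =>
    rename_i w
    rw [Walk.cons_isCycle_iff] at hc
    rw [Walk.edges_cons, List.mem_cons] at ha hb hd
    have qrev : q.reverse.IsPath := hc.1.reverse
    have hmem : ∀ x : V, s(z,x) ∈ q.edges → s(z,x) ∈ q.reverse.edges := by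
      intro x hx; rw [Walk.edges_reverse, List.mem_reverse]; exact hx
    have key : ∀ x : V, s(z,x) = s(z,w) ∨ s(z,x) ∈ q.edges → x = w ∨ s(z,x) ∈ q.reverse.edges := by
      intro x hx
      rcases hx with h1 | h2
      · exact Or.inl (Sym2.congr_right.mp h1)
      · exact Or.inr (hmem x h2)
    rcases key a ha with ha' | ha' <;> rcases key b hb with hb' | hb' <;>
      rcases key d hd with hd' | hd'
    · exact Or.inl (ha'.trans hb'.symm)
    · exact Or.inl (ha'.trans hb'.symm)
    · exact Or.inr (Or.inl (ha'.trans hd'.symm))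
    · exact Or.inr (Or.inr (path_head_nbr_unique _ qrev hb' hd'))
    · exact Or.inr (Or.inr (hb'.trans hd'.symm))
    · exact Or.inr (Or.inl (path_head_nbr_unique _ qrev ha' hd'))
    · exact Or.inl (path_head_nbr_unique _ qrev ha' hb')
    · exact Or.inl (path_head_nbr_unique _ qrev ha' hb')

lemma cycle_two_nbrs {r z a b d : V} {c : G.Walk r r} (hc : c.IsCycle)
    (ha : s(z,a) ∈ c.edges) (hb : s(z,b) ∈ c.edges) (hd : s(z,d) ∈ c.edges) :
    a = b ∨ a = d ∨ b = d := by
  have hz : z ∈ c.support := c.fst_mem_support_of_mem_edges ha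
  have hrota := (c.rotate_edges z hz).perm.mem_iff (a := s(z,a))
  have hrotb := (c.rotate_edges z hz).perm.mem_iff (a := s(z,b))
  have hrotd := (c.rotate_edges z hz).perm.mem_iff (a := s(z,d))
  exact cycle_two_nbrs_head (c.rotate z hz) (hc.rotate hz)
    (hrota.mpr ha) (hrotb.mpr hb) (hrotd.mpr hd)

lemma firstEdge_mem {x y : V} (Q : G.Walk x y) (h : x ≠ y) :
    s(x, Q.getVert 1) ∈ Q.edges := by
  cases Q with
  | nil => exact absurd rfl h
  | cons hadj q =>
    rw [Walk.getVert_cons_succ, Walk.getVert_zero, Walk.edges_cons]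
    exact List.mem_cons_self

lemma walk_unique_ext {r : V} {c : G.Walk r r} (hc : c.IsCycle) :
    ∀ (n : ℕ) {z z' y : V} (Q A : G.Walk z' y),
      A.length ≤ n → Q.IsPath → A.IsPath →
      (∀ e ∈ Q.edges, e ∈ c.edges) → (∀ e ∈ A.edges, e ∈ c.edges) →
      s(z, z') ∈ c.edges → z ∉ Q.support → z ∉ A.support → Q = A := by
  intro n
  induction n with
  | zero =>
    intro z z' y Q A hlen hQ hA _ _ _ _ _
    have h0 : A.length = 0 := Nat.le_zero.mp hlen
    have : z' = y := Walk.eq_of_length_eq_zero h0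
    subst this
    rw [path_loop_nil Q hQ, path_loop_nil A hA]
  | succ n ih =>
    intro z z' y Q A hlen hQ hA hQe hAe hzz' hzQ hzA
    by_cases hzy : z' = y
    · subst hzy
      rw [path_loop_nil Q hQ, path_loop_nil A hA]
    · cases Q with
      | nil => exact absurd rfl hzy
      | cons hq Q₁ =>
        cases A with
        | nil => exact absurd rfl hzy
        | cons ha A₁ =>
          rename_i q₁ a₁
          rw [Walk.cons_isPath_iff] at hQ hA
          have hq₁ : s(z', q₁) ∈ c.edges := hQe _ (by simp)
          have ha₁ : s(z', a₁) ∈ c.edges := hAe _ (by simp)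
          have hzz2 : s(z', z) ∈ c.edges := by rwa [Sym2.eq_swap]
          have hqa : q₁ = a₁ := by
            rcases cycle_two_nbrs hc hzz2 hq₁ ha₁ with h1 | h1 | h1
            · exfalso; apply hzQ; rw [h1, Walk.support_cons]
              exact List.mem_cons_of_mem _ Q₁.start_mem_support
            · exfalso; apply hzA; rw [h1, Walk.support_cons]
              exact List.mem_cons_of_mem _ A₁.start_mem_support
            · exact h1
          subst hqa
          have htail : Q₁ = A₁ := by
            refine ih Q₁ A₁ (by simpa using Nat.succ_le_succ_iff.mp hlen) hQ.1 hA.1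
              (fun e he => hQe e (by simp [he])) (fun e he => hAe e (by simp [he]))
              ha₁ hQ.2 hA.2
          rw [htail]

lemma arc_unique {r x y : V} {c : G.Walk r r} (hc : c.IsCycle) (hxy : x ≠ y)
    (Q A : G.Walk x y) (hQ : Q.IsPath) (hA : A.IsPath)
    (hQe : ∀ e ∈ Q.edges, e ∈ c.edges) (hAe : ∀ e ∈ A.edges, e ∈ c.edges)
    (hfirst : Q.getVert 1 = A.getVert 1) : Q = A := by
  cases Q with
  | nil => exact absurd rfl hxy
  | cons hq Q₁ =>
    cases A with
    | nil => exact absurd rfl hxy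
    | cons ha A₁ =>
      rename_i q₁ a₁
      have hqa : q₁ = a₁ := by
        simpa [Walk.getVert_cons_succ, Walk.getVert_zero] using hfirst
      subst hqa
      rw [Walk.cons_isPath_iff] at hQ hA
      have ha₁ : s(x, q₁) ∈ c.edges := hAe _ (by simp)
      have htail : Q₁ = A₁ :=
        walk_unique_ext hc A₁.length Q₁ A₁ le_rfl hQ.1 hA.1
          (fun e he => hQe e (by simp [he])) (fun e he => hAe e (by simp [he]))
          ha₁ hQ.2 hA.2
      rw [htail]

lemma mem_tail_of_mem_support' {r z : V} (c : G.Walk r r) (hnil : ¬ c.Nil)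
    (hz : z ∈ c.support) : z ∈ c.support.tail := by
  cases c with
  | nil => simp at hnil
  | cons h q =>
    rw [Walk.support_cons, List.tail_cons]
    rw [Walk.support_cons, List.mem_cons] at hz
    rcases hz with rfl | hz
    · exact q.end_mem_support
    · exact hz

lemma arc_decomp {r x y : V} {c : G.Walk r r} (hc : c.IsCycle) (hxy : x ≠ y)
    (hx : x ∈ c.support) (hy : y ∈ c.support) :
    ∃ A B : G.Walk x y, A.IsPath ∧ B.IsPath ∧ (∀ e ∈ A.edges, e ∈ c.edges) ∧
      (∀ e ∈ B.edges, e ∈ c.edges) ∧ A.length + B.length = c.length ∧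
      (∀ Q : G.Walk x y, Q.IsPath → (∀ e ∈ Q.edges, e ∈ c.edges) → Q = A ∨ Q = B) := by
  classical
  set c' := c.rotate x hx with hc'def
  have hc' : c'.IsCycle := hc.rotate hx
  have hnil : ¬ c.Nil := hc.not_nil
  have hytail : y ∈ c.support.tail := mem_tail_of_mem_support' c hnil hy
  have hy' : y ∈ c'.support := by
    apply List.mem_of_mem_tail
    exact ((Walk.support_rotate c x hx).mem_iff).mpr hytail
  set A := c'.takeUntil y hy' with hAdef
  set Bd := c'.dropUntil y hy' with hBdef
  have hspec : A.append Bd = c' := Walk.take_spec c' hy'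
  have hedgesc' : ∀ e, e ∈ c'.edges ↔ e ∈ c.edges :=
    fun e => (Walk.rotate_edges c x hx).perm.mem_iff
  have hlenc' : c'.length = c.length := by
    have := Walk.take_spec c hx
    calc c'.length = (c.dropUntil x hx).length + (c.takeUntil x hx).length := by
          rw [hc'def, Walk.rotate, Walk.length_append]
      _ = c.length := by rw [Nat.add_comm, ← Walk.length_append, this]
  have hsupp : c'.support = A.support ++ Bd.support.tail := by
    rw [← hspec, Walk.support_append]
  have htails : c'.support.tail = A.support.tail ++ Bd.support.tail := by
    have h1 : A.support = x :: A.support.tail := A.support_eq_cons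
    rw [hsupp, h1]; rfl
  have hnodup : c'.support.tail.Nodup := hc'.2
  rw [htails, List.nodup_append] at hnodup
  obtain ⟨hnodA, hnodB, hdisj⟩ := hnodup
  have hxBd : x ∈ Bd.support.tail := by
    have : x ∈ Bd.support := Bd.end_mem_support
    rw [Bd.support_eq_cons, List.mem_cons] at this
    rcases this with h1 | h1
    · exact absurd h1 hxy
    · exact h1
  have hApath : A.IsPath := by
    rw [Walk.isPath_def, A.support_eq_cons, List.nodup_cons]
    refine ⟨fun hmem => ?_, hnodA⟩
    exact hdisj x hmem x hxBd rfl
  have hyA : y ∈ A.support.tail := by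
    have : y ∈ A.support := A.end_mem_support
    rw [A.support_eq_cons, List.mem_cons] at this
    rcases this with h1 | h1
    · exact absurd h1 hxy.symm
    · exact h1
  have hBdpath : Bd.IsPath := by
    rw [Walk.isPath_def, Bd.support_eq_cons, List.nodup_cons]
    exact ⟨fun hmem => hdisj y hyA y hmem rfl, hnodB⟩
  have hAe : ∀ e ∈ A.edges, e ∈ c.edges := by
    intro e he
    exact (hedgesc' e).mp (Walk.edges_takeUntil_subset c' hy' he)
  have hBde : ∀ e ∈ Bd.edges, e ∈ c.edges := by
    intro e he
    exact (hedgesc' e).mp (Walk.edges_dropUntil_subset c' hy' he)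
  refine ⟨A, Bd.reverse, hApath, hBdpath.reverse, hAe, ?_, ?_, ?_⟩
  · intro e he
    rw [Walk.edges_reverse, List.mem_reverse] at he
    exact hBde e he
  · rw [Walk.length_reverse, ← hlenc', ← hspec, Walk.length_append]
  · intro Q hQpath hQe
    have hAnil : s(x, A.getVert 1) ∈ A.edges := firstEdge_mem A hxy
    have hBnil : s(x, Bd.reverse.getVert 1) ∈ Bd.reverse.edges := firstEdge_mem Bd.reverse hxy
    have hQnil : s(x, Q.getVert 1) ∈ Q.edges := firstEdge_mem Q hxy
    have hBmem : s(x, Bd.reverse.getVert 1) ∈ Bd.edges := by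
      rwa [Walk.edges_reverse, List.mem_reverse] at hBnil
    have hdisjE : ∀ e ∈ A.edges, e ∉ Bd.edges := by
      have := hc'.isTrail.edges_nodup
      rw [← hspec, Walk.edges_append, List.nodup_append] at this
      exact fun e he₁ he₂ => this.2.2 e he₁ e he₂ rfl
    have hABne : A.getVert 1 ≠ Bd.reverse.getVert 1 := by
      intro hcon
      apply hdisjE _ hAnil
      rwa [hcon]
    rcases cycle_two_nbrs hc (hAe _ hAnil) (hBde _ hBmem) (hQe _ hQnil) with h1 | h1 | h1
    · exact absurd h1 hABne
    · left
      exact arc_unique hc hxy Q A hQpath hApath hQe hAe h1.symm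
    · right
      refine arc_unique hc hxy Q Bd.reverse hQpath hBdpath.reverse hQe ?_ h1.symm
      intro e he
      rw [Walk.edges_reverse, List.mem_reverse] at he
      exact hBde e he

lemma supp_subset_of_edges_subset {a b r : V} (W : G.Walk a b) (c : G.Walk r r)
    (hnil : ¬ W.Nil) (he : ∀ e ∈ W.edges, e ∈ c.edges) : ∀ z ∈ W.support, z ∈ c.support := by
  induction W with
  | nil => simp at hnil
  | cons h q ih =>
    rename_i x m _
    intro z hz
    rw [Walk.support_cons, List.mem_cons] at hz
    have hhead : s(x, m) ∈ c.edges := he _ (by simp)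
    rcases hz with rfl | hz
    · exact c.fst_mem_support_of_mem_edges hhead
    · by_cases hq : q.Nil
      · rw [Walk.nil_iff_support_eq.mp hq, List.mem_singleton] at hz
        subst hz
        exact c.snd_mem_support_of_mem_edges hhead
      · exact ih hq (fun e he' => he e (by simp [he'])) z hz

lemma mem_edge_of_mem_support {a b : V} (W : G.Walk a b) (hnil : ¬ W.Nil) :
    ∀ z ∈ W.support, ∃ x, s(z,x) ∈ W.edges := by
  induction W with
  | nil => simp at hnil
  | cons h q ih =>
    rename_i x m _
    intro z hz
    rw [Walk.support_cons, List.mem_cons] at hz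
    rcases hz with rfl | hz
    · exact ⟨m, by simp⟩
    · by_cases hq : q.Nil
      · rw [Walk.nil_iff_support_eq.mp hq, List.mem_singleton] at hz
        subst hz
        exact ⟨x, by rw [Sym2.eq_swap]; simp⟩
      · obtain ⟨x', hx'⟩ := ih hq z hz
        exact ⟨x', by simp [hx']⟩

lemma cycle_support_card {r : V} (c : G.Walk r r) (hc : c.IsCycle) :
    c.support.toFinset.card = c.length := by
  have h1 : c.support = r :: c.support.tail := c.support_eq_cons
  have hr : r ∈ c.support.tail :=
    mem_tail_of_mem_support' c hc.not_nil c.start_mem_support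
  have h2 : c.support.toFinset = c.support.tail.toFinset := by
    conv_lhs => rw [h1]
    rw [List.toFinset_cons, Finset.insert_eq_self]
    exact List.mem_toFinset.mpr hr
  rw [h2, List.toFinset_card_of_nodup hc.2]
  have := c.length_support
  rw [h1] at this
  simpa using this

lemma path_support_card {a b : V} (p : G.Walk a b) (hp : p.IsPath) :
    p.support.toFinset.card = p.length + 1 := by
  rw [List.toFinset_card_of_nodup hp.support_nodup, p.length_support]

lemma union_supp_card_le {x y : V} (A B : G.Walk x y) (hxy : x ≠ y) :
    (A.support.toFinset ∪ B.support.toFinset).card ≤ A.length + B.length := by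
  have hsub : ({x, y} : Finset V) ⊆ A.support.toFinset ∩ B.support.toFinset := by
    intro z hz
    rw [Finset.mem_insert, Finset.mem_singleton] at hz
    rw [Finset.mem_inter, List.mem_toFinset, List.mem_toFinset]
    rcases hz with rfl | rfl
    · exact ⟨A.start_mem_support, B.start_mem_support⟩
    · exact ⟨A.end_mem_support, B.end_mem_support⟩
  have h2 : 2 ≤ (A.support.toFinset ∩ B.support.toFinset).card := by
    calc 2 = ({x, y} : Finset V).card := by
          rw [Finset.card_insert_of_notMem (by simpa using hxy), Finset.card_singleton]
      _ ≤ _ := Finset.card_le_card hsub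
  have h3 := Finset.card_union_add_card_inter A.support.toFinset B.support.toFinset
  have h4 : A.support.toFinset.card ≤ A.length + 1 := by
    calc A.support.toFinset.card ≤ A.support.length := A.support.toFinset_card_le
      _ = A.length + 1 := A.length_support
  have h5 : B.support.toFinset.card ≤ B.length + 1 := by
    calc B.support.toFinset.card ≤ B.support.length := B.support.toFinset_card_le
      _ = B.length + 1 := B.length_support
  omega

lemma hole_length_le {r' x y : V} (w : G.Walk r' r') (hw : w.IsCycle) (A B : G.Walk x y)
    (hxy : x ≠ y) (hsupp : suppSet w = suppSet A ∪ suppSet B) :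
    w.length ≤ A.length + B.length := by
  have hfs : w.support.toFinset = A.support.toFinset ∪ B.support.toFinset := by
    apply Finset.coe_injective
    rw [Finset.coe_union, List.coe_toFinset, List.coe_toFinset, List.coe_toFinset]
    exact hsupp
  calc w.length = w.support.toFinset.card := (cycle_support_card w hw).symm
    _ = (A.support.toFinset ∪ B.support.toFinset).card := by rw [hfs]
    _ ≤ A.length + B.length := union_supp_card_le A B hxy

lemma edges_subset_of_induced {a b r' : V} (X : G.Walk a b) (w : G.Walk r' r')
    (hind : ∀ x y : V, x ∈ w.support → y ∈ w.support → G.Adj x y → s(x,y) ∈ w.edges)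
    (hsub : ∀ z ∈ X.support, z ∈ w.support) : ∀ e ∈ X.edges, e ∈ w.edges := by
  intro e he
  obtain ⟨⟨x, y⟩, rfl⟩ := e.exists_rep
  exact hind x y (hsub _ (X.fst_mem_support_of_mem_edges he))
    (hsub _ (X.snd_mem_support_of_mem_edges he)) (X.adj_of_mem_edges he)

lemma arcpair_inter {r u v : V} {c : G.Walk r r} (hc : c.IsCycle) (huv : u ≠ v)
    {C1 C2 : G.Walk u v} (h1p : C1.IsPath) (h2p : C2.IsPath)
    (hsum : C1.length + C2.length = c.length)
    (hcov : ∀ e ∈ c.edges, e ∈ C1.edges ∨ e ∈ C2.edges) :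
    ∀ z, z ∈ C1.support → z ∈ C2.support → z = u ∨ z = v := by
  intro z hz1 hz2
  have hsubc : c.support.toFinset ⊆ C1.support.toFinset ∪ C2.support.toFinset := by
    intro x hx
    rw [List.mem_toFinset] at hx
    obtain ⟨x', hx'⟩ := mem_edge_of_mem_support c hc.not_nil x hx
    rcases hcov _ hx' with h | h
    · exact Finset.mem_union_left _ (List.mem_toFinset.mpr (C1.fst_mem_support_of_mem_edges h))
    · exact Finset.mem_union_right _ (List.mem_toFinset.mpr (C2.fst_mem_support_of_mem_edges h))
  have hcardc : c.length ≤ (C1.support.toFinset ∪ C2.support.toFinset).card := by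
    calc c.length = c.support.toFinset.card := (cycle_support_card c hc).symm
      _ ≤ _ := Finset.card_le_card hsubc
  have h3 := Finset.card_union_add_card_inter C1.support.toFinset C2.support.toFinset
  have hc1 := path_support_card C1 h1p
  have hc2 := path_support_card C2 h2p
  have hsubuv : ({u, v} : Finset V) ⊆ C1.support.toFinset ∩ C2.support.toFinset := by
    intro x hx
    rw [Finset.mem_insert, Finset.mem_singleton] at hx
    rw [Finset.mem_inter, List.mem_toFinset, List.mem_toFinset]
    rcases hx with rfl | rfl
    · exact ⟨C1.start_mem_support, C2.start_mem_support⟩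
    · exact ⟨C1.end_mem_support, C2.end_mem_support⟩
  have hcard_uv : ({u, v} : Finset V).card = 2 := by
    rw [Finset.card_insert_of_notMem (by simpa using huv), Finset.card_singleton]
  have heq : ({u, v} : Finset V) = C1.support.toFinset ∩ C2.support.toFinset := by
    apply Finset.eq_of_subset_of_card_le hsubuv
    omega
  have hzmem : z ∈ C1.support.toFinset ∩ C2.support.toFinset := by
    rw [Finset.mem_inter, List.mem_toFinset, List.mem_toFinset]
    exact ⟨hz1, hz2⟩
  rw [← heq, Finset.mem_insert, Finset.mem_singleton] at hzmem
  exact hzmem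

lemma shortest_path_induced {u v : V} (p : G.Walk u v) (hp : p.IsPath)
    (hmin : ∀ W : G.Walk u v, p.length ≤ W.length) :
    ∀ a b, a ∈ p.support → b ∈ p.support → G.Adj a b → s(a,b) ∈ p.edges := by
  intro a b ha hb hadj
  by_contra hne
  have hne' : s(b,a) ∉ p.edges := by rwa [Sym2.eq_swap]
  have hq := Walk.take_spec p hb
  have hlen : (p.takeUntil b hb).length + (p.dropUntil b hb).length = p.length := by
    rw [← Walk.length_append, hq]
  by_cases haq : a ∈ (p.takeUntil b hb).support
  · set q := p.takeUntil b hb with hqdef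
    have hub : 2 ≤ (q.dropUntil a haq).length := by
      have h1 : (q.dropUntil a haq).length ≠ 0 := fun h0 =>
        hadj.ne (Walk.eq_of_length_eq_zero h0)
      have h2 : (q.dropUntil a haq).length ≠ 1 := by
        intro h1'
        have := edge_mem_of_length_one _ h1'
        exact hne (Walk.edges_takeUntil_subset p hb (Walk.edges_dropUntil_subset q haq this))
      omega
    have hlq : (q.takeUntil a haq).length + (q.dropUntil a haq).length = q.length := by
      rw [← Walk.length_append, Walk.take_spec]
    have hW := hmin ((q.takeUntil a haq).append (Walk.cons hadj (p.dropUntil b hb)))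
    rw [Walk.length_append, Walk.length_cons] at hW
    omega
  · have har : a ∈ (p.dropUntil b hb).support := by
      rw [← hq, Walk.mem_support_append_iff] at ha
      tauto
    set r := p.dropUntil b hb with hrdef
    have hub : 2 ≤ (r.takeUntil a har).length := by
      have h1 : (r.takeUntil a har).length ≠ 0 := fun h0 =>
        hadj.ne (Walk.eq_of_length_eq_zero h0).symm
      have h2 : (r.takeUntil a har).length ≠ 1 := by
        intro h1'
        have := edge_mem_of_length_one _ h1'
        exact hne' (Walk.edges_dropUntil_subset p hb (Walk.edges_takeUntil_subset r har this))
      omega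
    have hlr : (r.takeUntil a har).length + (r.dropUntil a har).length = r.length := by
      rw [← Walk.length_append, Walk.take_spec]
    have hW := hmin ((p.takeUntil b hb).append (Walk.cons hadj.symm (r.dropUntil a har)))
    rw [Walk.length_append, Walk.length_cons] at hW
    omega

lemma cycleDist_le {r x y : V} (c : G.Walk r r) {Q : G.Walk x y} (h : IsPathOf G c Q) :
    cycleDist G c x y ≤ Q.length :=
  Nat.sInf_le ⟨Q, h, rfl⟩

lemma cycleDist_attain {r x y : V} (c : G.Walk r r) {Q₀ : G.Walk x y} (h : IsPathOf G c Q₀) :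
    ∃ Q : G.Walk x y, IsPathOf G c Q ∧ Q.length = cycleDist G c x y := by
  have hne : {n | ∃ Q : G.Walk x y, IsPathOf G c Q ∧ Q.length = n}.Nonempty :=
    ⟨Q₀.length, Q₀, h, rfl⟩
  exact Nat.sInf_mem hne

lemma cycleDist_triangle {r x z y : V} (c : G.Walk r r) {Q1 : G.Walk x z} {Q2 : G.Walk z y}
    (h1 : IsPathOf G c Q1) (h2 : IsPathOf G c Q2) :
    cycleDist G c x y ≤ Q1.length + Q2.length := by
  refine le_trans (cycleDist_le c (Q := (Q1.append Q2).bypass) ⟨Walk.bypass_isPath _, ?_⟩) ?_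
  · intro e he
    have := Walk.edges_bypass_subset _ he
    rw [Walk.edges_append, List.mem_append] at this
    rcases this with h | h
    · exact h1.2 e h
    · exact h2.2 e h
  · calc (Q1.append Q2).bypass.length ≤ (Q1.append Q2).length := Walk.length_bypass_le _
      _ = Q1.length + Q2.length := Walk.length_append _ _

end Helpers

set_option maxHeartbeats 2000000 in
theorem stmt3 (G : SimpleGraph V) {r u v : V} (c : G.Walk r r)
    (hC : IsShortestEvenHole G c) (P : G.Walk u v)
    (hworst : WorstCShortcut G c P) (hshallow : CShallow G c P)
    (C1 C2 : G.Walk u v) (harc : ArcPair G c C1 C2) (hlt : C1.length < C2.length) :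
    ∀ Puv : G.Walk u v, Puv.IsPath → Puv.length = P.length →
      IsHoleOn G (suppSet Puv ∪ suppSet C2) := by
  classical
  obtain ⟨⟨⟨⟨hcyc, hind⟩, hlen4⟩, heven⟩, hshortest⟩ := hC
  obtain ⟨⟨hPpath, huv, hnadj, huc, hvc⟩, ⟨hk2, hkd', h4k⟩, hnotgood, hmini⟩ := hworst
  obtain ⟨hshallow1, hshallow2⟩ := hshallow
  obtain ⟨⟨hC1path, hC1e⟩, ⟨hC2path, hC2e⟩, hsum, hcover⟩ := harc
  have hevenl : c.length % 2 = 0 := Nat.even_iff.mp heven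
  -- arcs at (u,v) and the value of d_C(u,v)
  obtain ⟨A, B, hApath, hBpath, hAe, hBe, hABsum, hcls⟩ := arc_decomp hcyc huv huc hvc
  have hclsC : ∀ Q : G.Walk u v, Q.IsPath → (∀ e ∈ Q.edges, e ∈ c.edges) →
      Q = C1 ∨ Q = C2 := by
    intro Q h1 h2
    have e1 := hcls C1 hC1path hC1e
    have e2 := hcls C2 hC2path hC2e
    have hne : C1 ≠ C2 := fun h => by rw [h] at hlt; exact lt_irrefl _ hlt
    rcases hcls Q h1 h2 with rfl | rfl
    · rcases e1 with h | h
      · exact Or.inl h.symm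
      · rcases e2 with h' | h'
        · exact Or.inr h'.symm
        · exact absurd (h.trans h'.symm) hne
    · rcases e1 with h | h
      · rcases e2 with h' | h'
        · exact absurd (h.trans h'.symm) hne
        · exact Or.inr h'.symm
      · exact Or.inl h.symm
  have hd : cycleDist G c u v = C1.length := by
    apply le_antisymm
    · exact cycleDist_le c ⟨hC1path, hC1e⟩
    · obtain ⟨Q, hQ, hQlen⟩ := cycleDist_attain c ⟨hC1path, hC1e⟩
      rcases hclsC Q hQ.1 hQ.2 with h | h
      · rw [← hQlen, h]
      · rw [← hQlen, h]; exact hlt.le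
  -- CGood implies a bound on cycleDist
  have hgoodB : ∀ (x y : V) (R : G.Walk x y), x ≠ y → x ∈ c.support → y ∈ c.support →
      CGood G c R → cycleDist G c x y ≤ R.length := by
    intro x y R hxy hx hy hg
    obtain ⟨Q, hQpo, hSEH⟩ := hg
    obtain ⟨A', B', hA'p, hB'p, hA'e, hB'e, hsum', hcls'⟩ := arc_decomp hcyc hxy hx hy
    obtain ⟨r', w, hw, hwsupp⟩ := hSEH
    have hl1 : c.length ≤ w.length := hshortest r' w hw.1
    have hl2 : w.length ≤ R.length + Q.length := hole_length_le w hw.1.1.1.1 R Q hxy hwsupp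
    have hdle : cycleDist G c x y ≤ A'.length := cycleDist_le c ⟨hA'p, hA'e⟩
    have hdle' : cycleDist G c x y ≤ B'.length := cycleDist_le c ⟨hB'p, hB'e⟩
    have hQl : Q.length = A'.length ∨ Q.length = B'.length := by
      rcases hcls' Q hQpo.1 hQpo.2 with h | h
      · exact Or.inl (congrArg Walk.length h)
      · exact Or.inr (congrArg Walk.length h)
    omega
  -- the key dichotomy for short walks between vertices of c
  have hKey : ∀ (x y : V) (W : G.Walk x y), x ≠ y → x ∈ c.support → y ∈ c.support →
      W.length ≤ P.length →
      ∃ m, m ≤ W.length ∧ (∀ W' : G.Walk x y, m ≤ W'.length) ∧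
        (cycleDist G c x y ≤ m ∨ (P.length = m ∧ cycleDist G c x y ≤ cycleDist G c u v)) := by
    intro x y W hxy hx hy hWk
    have hMne : {n | ∃ W' : G.Walk x y, W'.length = n}.Nonempty := ⟨W.length, W, rfl⟩
    obtain ⟨W₀, hW₀⟩ := Nat.sInf_mem hMne
    have hmin : ∀ W' : G.Walk x y, W₀.length ≤ W'.length := by
      intro W'
      rw [hW₀]
      exact Nat.sInf_le ⟨W', rfl⟩
    have hmle : W₀.length ≤ W.length := hmin W
    refine ⟨W₀.length, hmle, hmin, ?_⟩
    have hRpath := W₀.bypass_isPath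
    have hRlen : W₀.bypass.length = W₀.length :=
      le_antisymm W₀.length_bypass_le (hmin _)
    have hm01 : W₀.length = 0 ∨ W₀.length = 1 ∨ 2 ≤ W₀.length := by omega
    rcases hm01 with hm | hm | hm
    · exact absurd (Walk.eq_of_length_eq_zero (p := W₀.bypass) (by omega)) hxy
    · left
      have hR1 : W₀.bypass.length = 1 := by omega
      have hadj := W₀.bypass.adj_of_mem_edges (edge_mem_of_length_one _ hR1)
      have hce := hind x y hx hy hadj
      have hpath : (Walk.cons hadj Walk.nil : G.Walk x y).IsPath := by
        rw [Walk.isPath_def]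
        simp [hxy]
      have hedges : ∀ e ∈ (Walk.cons hadj Walk.nil : G.Walk x y).edges, e ∈ c.edges := by
        intro e he
        simp only [Walk.edges_cons, Walk.edges_nil, List.mem_singleton] at he
        rw [he]; exact hce
      have hle := cycleDist_le c ⟨hpath, hedges⟩
      have hl1 : (Walk.cons hadj Walk.nil : G.Walk x y).length = 1 := by simp
      omega
    · have hnadjxy : ¬ G.Adj x y := by
        intro hadj
        have h1 : W₀.length ≤ 1 := by simpa using hmin (Walk.cons hadj Walk.nil)
        omega
      have hsetup : ShortcutSetup G c W₀.bypass := ⟨hRpath, hxy, hnadjxy, hx, hy⟩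
      obtain ⟨A', B', hA'p, hB'p, hA'e, hB'e, hsum', hcls'⟩ := arc_decomp hcyc hxy hx hy
      obtain ⟨Q₀, hQ₀, hQ₀len⟩ := cycleDist_attain c ⟨hA'p, hA'e⟩
      have hmd : W₀.length ≤ cycleDist G c x y := by
        rw [← hQ₀len]; exact hmin Q₀
      have hscut : CShortcut G c W₀.bypass := by
        refine ⟨by omega, by omega, by omega⟩
      by_cases hg : CGood G c W₀.bypass
      · left
        have := hgoodB x y W₀.bypass hxy hx hy hg
        omega
      · rcases hmini x y W₀.bypass hsetup hscut hg with h1 | h2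
        · exfalso; omega
        · right; exact ⟨by omega, h2.2⟩
  -- every uv-walk has length at least ‖P‖
  have hstep2 : ∀ W : G.Walk u v, P.length ≤ W.length := by
    intro W
    by_contra hcon
    push_neg at hcon
    obtain ⟨m, hm1, hm2, hm3⟩ := hKey u v W huv huc hvc hcon.le
    rcases hm3 with h | h
    · omega
    · omega
  -- the hole on P ∪ C2 and the value ‖P‖ = ‖C1‖ - 1
  have hholeP := hshallow2 C1 C2 ⟨⟨hC1path, hC1e⟩, ⟨hC2path, hC2e⟩, hsum, hcover⟩ hlt.le
  obtain ⟨r', H, ⟨⟨Hcyc, Hind⟩, Hlen4⟩, hHsupp⟩ := hholeP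
  have huH : u ∈ H.support := by
    have : u ∈ suppSet H := by
      rw [hHsupp]; exact Or.inl P.start_mem_support
    exact this
  have hvH : v ∈ H.support := by
    have : v ∈ suppSet H := by
      rw [hHsupp]; exact Or.inl P.end_mem_support
    exact this
  obtain ⟨AH, BH, hAHp, hBHp, hAHe, hBHe, hsumH, hclsH⟩ := arc_decomp Hcyc huv huH hvH
  have hPeH : ∀ e ∈ P.edges, e ∈ H.edges := by
    refine edges_subset_of_induced P H Hind ?_
    intro z hz
    have : z ∈ suppSet H := by rw [hHsupp]; exact Or.inl hz
    exact this
  have hC2eH : ∀ e ∈ C2.edges, e ∈ H.edges := by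
    refine edges_subset_of_induced C2 H Hind ?_
    intro z hz
    have : z ∈ suppSet H := by rw [hHsupp]; exact Or.inr hz
    exact this
  have hPC2ne : P ≠ C2 := by
    intro h
    have : P.length = C2.length := congrArg Walk.length h
    omega
  have hHlen : H.length = P.length + C2.length := by
    rcases hclsH P hPpath hPeH with h1 | h1 <;> rcases hclsH C2 hC2path hC2eH with h2 | h2
    · exact absurd (h1.trans h2.symm) hPC2ne
    · have e1 := congrArg Walk.length h1
      have e2 := congrArg Walk.length h2
      omega
    · have e1 := congrArg Walk.length h1
      have e2 := congrArg Walk.length h2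
      omega
    · exact absurd (h1.trans h2.symm) hPC2ne
  have hkC1 : P.length + 1 = C1.length := by
    by_cases hHeven : Even H.length
    · exfalso
      apply hnotgood
      refine ⟨C2, ⟨hC2path, hC2e⟩, r', H, ⟨⟨⟨⟨Hcyc, Hind⟩, Hlen4⟩, hHeven⟩, ?_⟩, hHsupp⟩
      intro y' w' hw'
      have h1 := hshortest y' w' hw'
      omega
    · have hH1 : H.length % 2 = 1 := Nat.not_even_iff.mp hHeven
      have hsh := hshallow1
      omega
  -- now fix a uv-path of the same length
  intro Puv hPuvp hPuvlen
  have hPuvmin : ∀ W : G.Walk u v, Puv.length ≤ W.length := by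
    intro W; rw [hPuvlen]; exact hstep2 W
  have hPuvind := shortest_path_induced Puv hPuvp hPuvmin
  -- Puv meets c only in u and v
  have hmeetc : ∀ z, z ∈ Puv.support → z ∈ c.support → z = u ∨ z = v := by
    intro z hz hzc
    by_contra hcon
    push_neg at hcon
    obtain ⟨hzu, hzv⟩ := hcon
    have hlsum : (Puv.takeUntil z hz).length + (Puv.dropUntil z hz).length = P.length := by
      rw [← hPuvlen, ← Walk.length_append, Walk.take_spec]
    have hl1 : 1 ≤ (Puv.takeUntil z hz).length :=
      Walk.not_nil_iff_lt_length.mp (Walk.not_nil_of_ne (fun h => hzu h.symm))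
    have hl2 : 1 ≤ (Puv.dropUntil z hz).length :=
      Walk.not_nil_iff_lt_length.mp (Walk.not_nil_of_ne hzv)
    obtain ⟨m1, hm1a, hm1b, hm1c⟩ :=
      hKey u z (Puv.takeUntil z hz) (fun h => hzu h.symm) huc hzc (by omega)
    have hduz : cycleDist G c u z ≤ (Puv.takeUntil z hz).length := by
      rcases hm1c with h | h
      · omega
      · omega
    obtain ⟨m2, hm2a, hm2b, hm2c⟩ :=
      hKey z v (Puv.dropUntil z hz) hzv hzc hvc (by omega)
    have hdzv : cycleDist G c z v ≤ (Puv.dropUntil z hz).length := by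
      rcases hm2c with h | h
      · omega
      · omega
    obtain ⟨A1, B1, hA1p, hB1p, hA1e, hB1e, hsum1, hcls1⟩ :=
      arc_decomp hcyc (fun h => hzu h.symm) huc hzc
    obtain ⟨Qa, hQa, hQalen⟩ := cycleDist_attain c ⟨hA1p, hA1e⟩
    obtain ⟨A2, B2, hA2p, hB2p, hA2e, hB2e, hsum2, hcls2⟩ :=
      arc_decomp hcyc hzv hzc hvc
    obtain ⟨Qb, hQb, hQblen⟩ := cycleDist_attain c ⟨hA2p, hA2e⟩
    have htri : cycleDist G c u v ≤ Qa.length + Qb.length := cycleDist_triangle c hQa hQb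
    omega
  -- no mixed adjacency between interior of Puv and interior of C2
  have hC2nn : ¬ C2.Nil := Walk.not_nil_of_ne huv
  have hC2suppc : ∀ z ∈ C2.support, z ∈ c.support :=
    supp_subset_of_edges_subset C2 c hC2nn hC2e
  have hnomix : ∀ p z, p ∈ Puv.support → p ≠ u → p ≠ v → z ∈ C2.support → z ≠ u → z ≠ v →
      ¬ G.Adj p z := by
    intro p z hp hpu hpv hz hzu hzv hadj
    have hzc : z ∈ c.support := hC2suppc z hz
    have hab : (Puv.takeUntil p hp).length + (Puv.dropUntil p hp).length = P.length := by
      rw [← hPuvlen, ← Walk.length_append, Walk.take_spec]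
    have ha1 : 1 ≤ (Puv.takeUntil p hp).length :=
      Walk.not_nil_iff_lt_length.mp (Walk.not_nil_of_ne (fun h => hpu h.symm))
    have hb1 : 1 ≤ (Puv.dropUntil p hp).length :=
      Walk.not_nil_iff_lt_length.mp (Walk.not_nil_of_ne hpv)
    -- walk from u to z of length a+1
    have hW1len : ((Puv.takeUntil p hp).append (Walk.cons hadj Walk.nil)).length
        = (Puv.takeUntil p hp).length + 1 := by
      rw [Walk.length_append]; simp
    obtain ⟨m1, hm1a, hm1b, hm1c⟩ :=
      hKey u z ((Puv.takeUntil p hp).append (Walk.cons hadj Walk.nil))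
        (fun h => hzu h.symm) huc hzc (by omega)
    have hduz : cycleDist G c u z ≤ cycleDist G c u v := by
      rcases hm1c with h | h
      · omega
      · omega
    -- walk from z to v of length b+1
    have hW2len : (Walk.cons hadj.symm (Puv.dropUntil p hp)).length
        = (Puv.dropUntil p hp).length + 1 := by
      rw [Walk.length_cons]
    obtain ⟨m2, hm2a, hm2b, hm2c⟩ :=
      hKey z v (Walk.cons hadj.symm (Puv.dropUntil p hp)) hzv hzc hvc (by omega)
    have hdzv : cycleDist G c z v ≤ cycleDist G c u v := by
      rcases hm2c with h | h
      · omega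
      · omega
    -- split C2 at z
    have hst : (C2.takeUntil z hz).length + (C2.dropUntil z hz).length = C2.length := by
      rw [← Walk.length_append, Walk.take_spec]
    have hs1 : 1 ≤ (C2.takeUntil z hz).length :=
      Walk.not_nil_iff_lt_length.mp (Walk.not_nil_of_ne (fun h => hzu h.symm))
    have ht1 : 1 ≤ (C2.dropUntil z hz).length :=
      Walk.not_nil_iff_lt_length.mp (Walk.not_nil_of_ne hzv)
    -- arcs between u and z
    obtain ⟨A1, B1, hA1p, hB1p, hA1e, hB1e, hsum1, hcls1⟩ :=
      arc_decomp hcyc (fun h => hzu h.symm) huc hzc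
    obtain ⟨Qa, hQa, hQalen⟩ := cycleDist_attain c ⟨hA1p, hA1e⟩
    have htk : C2.takeUntil z hz = A1 ∨ C2.takeUntil z hz = B1 := by
      refine hcls1 _ (hC2path.takeUntil hz) ?_
      intro e he
      exact hC2e e (Walk.edges_takeUntil_subset C2 hz he)
    have hQacase : Qa = A1 ∨ Qa = B1 := hcls1 Qa hQa.1 hQa.2
    have hs1d : (C2.takeUntil z hz).length ≤ cycleDist G c u v := by
      rcases htk with h1 | h1 <;> rcases hQacase with h2 | h2 <;>
        (have e1 := congrArg Walk.length h1; have e2 := congrArg Walk.length h2; omega)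
    -- arcs between z and v
    obtain ⟨A2, B2, hA2p, hB2p, hA2e, hB2e, hsum2, hcls2⟩ :=
      arc_decomp hcyc hzv hzc hvc
    obtain ⟨Qb, hQb, hQblen⟩ := cycleDist_attain c ⟨hA2p, hA2e⟩
    have hdr : C2.dropUntil z hz = A2 ∨ C2.dropUntil z hz = B2 := by
      refine hcls2 _ (hC2path.dropUntil hz) ?_
      intro e he
      exact hC2e e (Walk.edges_dropUntil_subset C2 hz he)
    have hQbcase : Qb = A2 ∨ Qb = B2 := hcls2 Qb hQb.1 hQb.2
    have ht1d : (C2.dropUntil z hz).length ≤ cycleDist G c u v := by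
      rcases hdr with h1 | h1 <;> rcases hQbcase with h2 | h2 <;>
        (have e1 := congrArg Walk.length h1; have e2 := congrArg Walk.length h2; omega)
    omega
  -- intersection of C1 and C2
  have hinterC : ∀ z, z ∈ C1.support → z ∈ C2.support → z = u ∨ z = v :=
    arcpair_inter hcyc huv hC1path hC2path hsum hcover
  -- C2 is an induced path
  have hC2ind : ∀ a b : V, a ∈ C2.support → b ∈ C2.support → G.Adj a b →
      s(a,b) ∈ C2.edges := by
    intro a b ha hb hadj
    have hac := hC2suppc a ha
    have hbc := hC2suppc b hb
    rcases hcover _ (hind a b hac hbc hadj) with h | h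
    · exfalso
      have ha1 : a ∈ C1.support := C1.fst_mem_support_of_mem_edges h
      have hb1 : b ∈ C1.support := C1.snd_mem_support_of_mem_edges h
      rcases hinterC a ha1 ha with rfl | rfl <;> rcases hinterC b hb1 hb with rfl | rfl
      · exact hadj.ne rfl
      · exact hnadj hadj
      · exact hnadj hadj.symm
      · exact hadj.ne rfl
    · exact h
  -- edges of Puv and C2 are disjoint
  have hedisj : ∀ e ∈ Puv.edges, e ∉ C2.edges := by
    intro e he1 he2
    obtain ⟨⟨a, b⟩, rfl⟩ := e.exists_rep
    have hadj := Puv.adj_of_mem_edges he1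
    have haP : a ∈ Puv.support := Puv.fst_mem_support_of_mem_edges he1
    have hbP : b ∈ Puv.support := Puv.snd_mem_support_of_mem_edges he1
    have haC : a ∈ C2.support := C2.fst_mem_support_of_mem_edges he2
    have hbC : b ∈ C2.support := C2.snd_mem_support_of_mem_edges he2
    rcases hmeetc a haP (hC2suppc a haC) with rfl | rfl <;>
      rcases hmeetc b hbP (hC2suppc b hbC) with rfl | rfl
    · exact hadj.ne rfl
    · exact hnadj hadj
    · exact hnadj hadj.symm
    · exact hadj.ne rfl
  -- build the cycle W = Puv + reverse C2
  have hWedges : ∀ e, e ∈ (Puv.append C2.reverse).edges ↔ (e ∈ Puv.edges ∨ e ∈ C2.edges) := by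
    intro e
    rw [Walk.edges_append, List.mem_append, Walk.edges_reverse, List.mem_reverse]
  have hWsupp : ∀ x, x ∈ (Puv.append C2.reverse).support ↔
      (x ∈ Puv.support ∨ x ∈ C2.support) := by
    intro x
    rw [Walk.mem_support_append_iff, Walk.support_reverse, List.mem_reverse]
  have hWlen : (Puv.append C2.reverse).length = P.length + C2.length := by
    rw [Walk.length_append, Walk.length_reverse, hPuvlen]
  have hWcyc : (Puv.append C2.reverse).IsCycle := by
    rw [Walk.isCycle_def]
    refine ⟨⟨?_⟩, ?_, ?_⟩
    · rw [Walk.edges_append, List.nodup_append]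
      refine ⟨hPuvp.isTrail.edges_nodup, (hC2path.reverse).isTrail.edges_nodup, ?_⟩
      intro e he1 e' he2 hee'
      rw [← hee'] at he2
      exact hedisj e he1 (by rwa [Walk.edges_reverse, List.mem_reverse] at he2)
    · intro h
      have h0 : (Puv.append C2.reverse).length = 0 := by rw [h]; rfl
      omega
    · have hsupp2 : (Puv.append C2.reverse).support
          = Puv.support ++ C2.reverse.support.tail := Walk.support_append _ _
      have htl : (Puv.append C2.reverse).support.tail
          = Puv.support.tail ++ C2.reverse.support.tail := by
        rw [hsupp2]
        conv_lhs => rw [Puv.support_eq_cons]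
        rw [List.cons_append, List.tail_cons]
      rw [htl, List.nodup_append]
      have hPuvnd := hPuvp.support_nodup
      rw [Puv.support_eq_cons, List.nodup_cons] at hPuvnd
      have hC2rnd := (hC2path.reverse).support_nodup
      refine ⟨hPuvnd.2, hC2rnd.tail, ?_⟩
      intro x hx1 x' hx2 hxx'
      rw [← hxx'] at hx2
      have hxP : x ∈ Puv.support := by
        rw [Puv.support_eq_cons]; exact List.mem_cons_of_mem _ hx1
      have hxC : x ∈ C2.support := by
        have := List.mem_of_mem_tail hx2
        rwa [Walk.support_reverse, List.mem_reverse] at this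
      rcases hmeetc x hxP (hC2suppc x hxC) with rfl | rfl
      · exact hPuvnd.1 hx1
      · have := hC2rnd
        rw [C2.reverse.support_eq_cons, List.nodup_cons] at this
        exact this.1 hx2
  refine ⟨u, Puv.append C2.reverse, ⟨⟨hWcyc, ?_⟩, ?_⟩, ?_⟩
  · -- induced
    intro a b ha hb hadj
    rw [hWedges]
    rcases (hWsupp a).mp ha with ha' | ha' <;> rcases (hWsupp b).mp hb with hb' | hb'
    · exact Or.inl (hPuvind a b ha' hb' hadj)
    · by_cases hbu : b = u ∨ b = v
      · refine Or.inl (hPuvind a b ha' ?_ hadj)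
        rcases hbu with rfl | rfl
        · exact Puv.start_mem_support
        · exact Puv.end_mem_support
      · push_neg at hbu
        by_cases hau : a = u ∨ a = v
        · refine Or.inr (hC2ind a b ?_ hb' hadj)
          rcases hau with rfl | rfl
          · exact C2.start_mem_support
          · exact C2.end_mem_support
        · push_neg at hau
          exact absurd hadj (hnomix a b ha' hau.1 hau.2 hb' hbu.1 hbu.2)
    · by_cases hau : a = u ∨ a = v
      · refine Or.inl (hPuvind a b ?_ hb' hadj)
        rcases hau with rfl | rfl
        · exact Puv.start_mem_support
        · exact Puv.end_mem_support
      · push_neg at hau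
        by_cases hbu : b = u ∨ b = v
        · refine Or.inr (hC2ind a b ha' ?_ hadj)
          rcases hbu with rfl | rfl
          · exact C2.start_mem_support
          · exact C2.end_mem_support
        · push_neg at hbu
          exact absurd hadj.symm (hnomix b a hb' hbu.1 hbu.2 ha' hau.1 hau.2)
    · exact Or.inr (hC2ind a b ha' hb' hadj)
  · -- length at least 4
    omega
  · -- support set
    ext x
    simp only [suppSet, Set.mem_setOf_eq, Set.mem_union]
    exact hWsupp x
end

section
/- Let C be a shortest even hole of a graph G, let u and v be distinct vertices of C, let the uv-path P of G be a C-shallow worst C-shortcut, and let C1, C2 be the uv-paths of C with ‖C1‖ < ‖C2‖. Let x (respectively, y) be the neighbor of u (respectively, v) in C1, and let C3 be the xy-path of C1. Then every xy-path P_xy of G satisfies ‖C3‖ ≤ ‖P_xy‖. -/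
open SimpleGraph

variable {V : Type*}

section AuxiliaryLemmas

variable {G : SimpleGraph V}

/-- The number of edges of `E` incident to the vertex `w`. -/
def degC [DecidableEq V] (w : V) (E : Finset (Sym2 V)) : ℕ :=
  (E.filter (fun e => w ∈ e)).card

lemma degC_mono [DecidableEq V] {w : V} {E F : Finset (Sym2 V)} (h : E ⊆ F) :
    degC w E ≤ degC w F :=
  Finset.card_le_card (Finset.filter_subset_filter _ h)

lemma degC_insert [DecidableEq V] {w : V} {e : Sym2 V} {E : Finset (Sym2 V)} (he : e ∉ E) :
    degC w (insert e E) = (if w ∈ e then 1 else 0) + degC w E := by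
  unfold degC
  rw [Finset.filter_insert]
  split
  · rw [Finset.card_insert_of_notMem (fun h => he (Finset.mem_of_mem_filter _ h))]
    omega
  · simp

lemma loop_isPath_length {a : V} {W : G.Walk a a} (hW : W.IsPath) : W.length = 0 := by
  cases W with
  | nil => rfl
  | cons h W' =>
    exact absurd W'.end_mem_support ((Walk.cons_isPath_iff _ _).mp hW).2

lemma path_degC [DecidableEq V] {a b : V} (W : G.Walk a b) (hW : W.IsPath) (w : V) :
    degC w W.edges.toFinset =
      if w ∈ W.support then (if w = a ∨ w = b then (if a = b then 0 else 1) else 2) else 0 := by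
  induction W with
  | nil =>
    unfold degC
    simp only [Walk.edges_nil, List.toFinset_nil, Finset.filter_empty, Finset.card_empty,
      Walk.support_nil, List.mem_singleton]
    split <;> simp_all
  | @cons u u2 b' h W' ih =>
    have hW' : W'.IsPath := hW.of_cons
    have hu : u ∉ W'.support := ((Walk.cons_isPath_iff h W').mp hW).2
    have he0 : s(u, u2) ∉ W'.edges := fun hmem => hu (W'.fst_mem_support_of_mem_edges hmem)
    have hub : u ≠ b' := fun h' => hu (h' ▸ W'.end_mem_support)
    rw [Walk.edges_cons, List.toFinset_cons, degC_insert (by simpa using he0), ih hW' ]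
    by_cases hwu : w = u
    · subst hwu
      simp [Sym2.mem_iff, hu, hub, Walk.support_cons]
    · by_cases hwu2 : w = u2
      · subst hwu2
        by_cases h2b : w = b'
        · subst h2b
          simp [Sym2.mem_iff, hwu, Walk.support_cons, Ne.symm hwu]
        · have hmem : w ∈ W'.support := W'.start_mem_support
          simp [Sym2.mem_iff, hwu, h2b, hmem, Walk.support_cons, Ne.symm hwu]
      · have hne : w ∉ s(u, u2) := by simp [Sym2.mem_iff, hwu, hwu2]
        rw [if_neg hne]
        simp only [Walk.support_cons, List.mem_cons]
        by_cases hws : w ∈ W'.support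
        · have hab' : u ≠ b' := hub
          by_cases hwb : w = b'
          · subst hwb
            simp [hws, hwu, hwu2, Ne.symm hwu2, hab']
          · simp [hws, hwu, hwu2, hwb]
        · simp [hws, hwu]

lemma cycle_degC [DecidableEq V] {r : V} {c : G.Walk r r} (hc : c.IsCycle) {w : V}
    (hw : w ∈ c.support) : degC w c.edges.toFinset = 2 := by
  have hrot : (c.rotate w hw).IsCycle := hc.rotate hw
  have hEd : (c.rotate w hw).edges.toFinset = c.edges.toFinset :=
    List.toFinset_eq_of_perm _ _ (c.rotate_edges w hw).perm
  rw [← hEd]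
  have hnil : ¬(c.rotate w hw).Nil := by
    rw [Walk.not_nil_iff_lt_length]; have := hrot.three_le_length; omega
  obtain ⟨p2, hadj, d', hd⟩ := Walk.not_nil_iff.mp hnil
  rw [hd] at hrot ⊢
  rw [Walk.cons_isCycle_iff] at hrot
  rw [Walk.edges_cons, List.toFinset_cons, degC_insert (by simpa using hrot.2),
    path_degC d' hrot.1 w]
  have hmem : w ∈ d'.support := d'.end_mem_support
  simp [hmem, hadj.ne, Ne.symm hadj.ne]

lemma cycle_support_card_s4 [DecidableEq V] {r : V} {w : G.Walk r r} (hw : w.IsCycle) :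
    w.support.toFinset.card = w.length := by
  have hnil : ¬ w.Nil := by
    rw [Walk.not_nil_iff_lt_length]; have := hw.three_le_length; omega
  have h2 : r ∈ w.support.tail := by
    rw [← Walk.support_tail_of_not_nil w hnil]; exact Walk.end_mem_support _
  have h3 : w.support.toFinset = w.support.tail.toFinset := by
    conv_lhs => rw [w.support_eq_cons]
    rw [List.toFinset_cons, Finset.insert_eq_self.mpr (List.mem_toFinset.mpr h2)]
  rw [h3, List.toFinset_card_of_nodup hw.support_nodup]
  have h4 := w.length_support
  simp [List.length_tail, h4]

lemma prop_aux [DecidableEq V] {Ec S : Finset (Sym2 V)} (hSE : S ⊆ Ec)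
    (hEven : ∀ w, Even (degC w S)) :
    ∀ {p p2 q : V} (h : G.Adj p p2) (W : G.Walk p2 q),
      (Walk.cons h W).edges.Nodup → (∀ e ∈ (Walk.cons h W).edges, e ∈ Ec) →
      (∀ w ∈ (Walk.cons h W).support, degC w Ec = 2) →
      s(p, p2) ∈ S → ∀ e ∈ (Walk.cons h W).edges, e ∈ S := by
  intro p p2 q h W
  revert p
  induction W with
  | nil =>
    intro p h _ _ _ hS e he
    simp only [Walk.edges_cons, Walk.edges_nil, List.mem_cons, List.not_mem_nil, or_false] at he
    rwa [he]
  | @cons u2 p3 q h2 W2 ih =>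
    intro p h hnodup hEc hdeg hS e he
    have he1S : s(u2, p3) ∈ S := by
      have hfil : (Ec.filter (fun z => u2 ∈ z)).card = 2 := hdeg u2 (by simp)
      have he0f : s(p, u2) ∈ Ec.filter (fun z => u2 ∈ z) :=
        Finset.mem_filter.mpr ⟨hEc _ (by simp), by simp⟩
      have he1f : s(u2, p3) ∈ Ec.filter (fun z => u2 ∈ z) :=
        Finset.mem_filter.mpr ⟨hEc _ (by simp), by simp⟩
      have hne : s(p, u2) ≠ s(u2, p3) := by
        have := hnodup
        simp only [Walk.edges_cons, List.nodup_cons, List.mem_cons] at this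
        exact fun hcontra => this.1 (Or.inl hcontra)
      have hpair : ({s(p, u2), s(u2, p3)} : Finset (Sym2 V)) ⊆ Ec.filter (fun z => u2 ∈ z) := by
        intro z hz
        rcases Finset.mem_insert.mp hz with rfl | hz
        · exact he0f
        · rw [Finset.mem_singleton.mp hz]; exact he1f
      have heq : ({s(p, u2), s(u2, p3)} : Finset (Sym2 V)) = Ec.filter (fun z => u2 ∈ z) :=
        Finset.eq_of_subset_of_card_le hpair (by rw [hfil, Finset.card_pair hne])
      by_contra he1S
      have hone : S.filter (fun z => u2 ∈ z) = {s(p, u2)} := by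
        apply Finset.Subset.antisymm
        · intro z hz
          have hz2 : z ∈ Ec.filter (fun z => u2 ∈ z) :=
            Finset.mem_filter.mpr ⟨hSE (Finset.mem_filter.mp hz).1, (Finset.mem_filter.mp hz).2⟩
          rw [← heq] at hz2
          rcases Finset.mem_insert.mp hz2 with rfl | hz2
          · exact Finset.mem_singleton_self _
          · rw [Finset.mem_singleton.mp hz2] at hz
            exact absurd (Finset.mem_filter.mp hz).1 he1S
        · intro z hz
          rw [Finset.mem_singleton.mp hz]
          exact Finset.mem_filter.mpr ⟨hS, by simp⟩
      have := hEven u2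
      rw [degC, hone, Finset.card_singleton] at this
      exact (Nat.not_even_iff_odd.mpr odd_one) this
    have htail := ih h2
      (by have := hnodup; simp only [Walk.edges_cons, List.nodup_cons] at this ⊢; exact this.2)
      (fun z hz => hEc z (by simp only [Walk.edges_cons, List.mem_cons] at hz ⊢; tauto))
      (fun z hz => hdeg z (by simp only [Walk.support_cons, List.mem_cons] at hz ⊢; tauto))
      he1S
    simp only [Walk.edges_cons, List.mem_cons] at he
    rcases he with rfl | he
    · exact hS
    · exact htail e (by simpa using he)

lemma even_sub_cycle [DecidableEq V] {r : V} {c : G.Walk r r} (hc : c.IsCycle)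
    {S : Finset (Sym2 V)} (hS : S ⊆ c.edges.toFinset) (hEven : ∀ w, Even (degC w S)) :
    S = ∅ ∨ S = c.edges.toFinset := by
  rcases S.eq_empty_or_nonempty with h0 | ⟨e, he⟩
  · exact Or.inl h0
  right
  induction e using Sym2.ind with
  | _ w1 w2 =>
  have hw1c : w1 ∈ c.support := c.fst_mem_support_of_mem_edges (List.mem_toFinset.mp (hS he))
  set d := c.rotate w1 hw1c with hd_def
  have hdcyc : d.IsCycle := hc.rotate hw1c
  have hEd : d.edges.toFinset = c.edges.toFinset :=
    List.toFinset_eq_of_perm _ _ (c.rotate_edges w1 hw1c).perm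
  have hmemEd : ∀ z, z ∈ d.edges ↔ z ∈ c.edges := by
    intro z
    constructor <;> intro hz
    · exact List.mem_toFinset.mp (hEd ▸ List.mem_toFinset.mpr hz)
    · exact List.mem_toFinset.mp (hEd.symm ▸ List.mem_toFinset.mpr hz)
  have hsupd : ∀ z, z ∈ d.support → z ∈ c.support := by
    intro z hz
    rw [Walk.mem_support_iff] at hz
    rcases hz with rfl | hz
    · exact hw1c
    · have hz2 : z ∈ c.support.tail := ((c.support_rotate w1 hw1c).perm.mem_iff).mp hz
      rw [c.support_eq_cons]
      exact List.mem_cons_of_mem _ hz2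
  have hdegd : ∀ z ∈ d.support, degC z c.edges.toFinset = 2 :=
    fun z hz => cycle_degC hc (hsupd z hz)
  have hlen3 : 3 ≤ d.length := hdcyc.three_le_length
  have hnil : ¬ d.Nil := by rw [Walk.not_nil_iff_lt_length]; omega
  obtain ⟨p2, hadj, d', hdd⟩ := Walk.not_nil_iff.mp hnil
  have hnilrev : ¬ d.reverse.Nil := by
    rw [Walk.not_nil_iff_lt_length, Walk.length_reverse]; omega
  obtain ⟨q2, hadj2, d'', hrd⟩ := Walk.not_nil_iff.mp hnilrev
  have hnodup : d.edges.Nodup := hdcyc.edges_nodup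
  have hf1m : s(w1, p2) ∈ d.edges := by rw [hdd]; simp
  have hf2m : s(w1, q2) ∈ d.edges := by
    have h1 : s(w1, q2) ∈ d.reverse.edges := by rw [hrd]; simp
    rwa [Walk.edges_reverse, List.mem_reverse] at h1
  have hne12 : s(w1, p2) ≠ s(w1, q2) := by
    intro hcontra
    have hrev : d.reverse.edges = s(w1, q2) :: d''.edges := by rw [hrd]; simp
    rw [Walk.edges_reverse] at hrev
    have hd1 : d.edges = s(w1, p2) :: d'.edges := by rw [hdd]; simp
    have hlast : s(w1, q2) ∈ d'.edges := by
      have hgl : d.edges.getLast? = some s(w1, q2) := by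
        rw [← List.head?_reverse, hrev]; rfl
      have hlen' : d'.edges ≠ [] := by
        have : d'.edges.length = d.length - 1 := by
          have := congrArg List.length hd1
          simp [Walk.length_edges] at this ⊢
          omega
        intro hnilE; rw [hnilE] at this; simp at this; omega
      obtain ⟨b, t, hbt⟩ := List.exists_cons_of_ne_nil hlen'
      rw [hd1, hbt, List.getLast?_cons_cons] at hgl
      have hmm : s(w1, q2) ∈ (b :: t).getLast? := by rw [hgl]; rfl
      obtain ⟨hne', heq'⟩ := List.mem_getLast?_eq_getLast hmm
      rw [hbt]
      exact heq' ▸ List.getLast_mem hne'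
    rw [hd1] at hnodup
    exact (List.nodup_cons.mp hnodup).1 (hcontra ▸ hlast)
  have hfil : (c.edges.toFinset.filter (fun z => w1 ∈ z)).card = 2 :=
    hdegd w1 d.start_mem_support
  have hef : s(w1, w2) ∈ c.edges.toFinset.filter (fun z => w1 ∈ z) :=
    Finset.mem_filter.mpr ⟨hS he, by simp⟩
  have h1f : s(w1, p2) ∈ c.edges.toFinset.filter (fun z => w1 ∈ z) :=
    Finset.mem_filter.mpr ⟨List.mem_toFinset.mpr ((hmemEd _).mp hf1m), by simp⟩
  have h2f : s(w1, q2) ∈ c.edges.toFinset.filter (fun z => w1 ∈ z) :=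
    Finset.mem_filter.mpr ⟨List.mem_toFinset.mpr ((hmemEd _).mp hf2m), by simp⟩
  have hpair : ({s(w1, p2), s(w1, q2)} : Finset (Sym2 V)) ⊆
      c.edges.toFinset.filter (fun z => w1 ∈ z) := by
    intro z hz
    rcases Finset.mem_insert.mp hz with rfl | hz
    · exact h1f
    · rw [Finset.mem_singleton.mp hz]; exact h2f
  have heqp : ({s(w1, p2), s(w1, q2)} : Finset (Sym2 V)) =
      c.edges.toFinset.filter (fun z => w1 ∈ z) :=
    Finset.eq_of_subset_of_card_le hpair (by rw [hfil, Finset.card_pair hne12])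
  have hcase : s(w1, w2) = s(w1, p2) ∨ s(w1, w2) = s(w1, q2) := by
    have := heqp ▸ hef
    rcases Finset.mem_insert.mp this with h' | h'
    · exact Or.inl h'
    · exact Or.inr (Finset.mem_singleton.mp h')
  have hall : ∀ z ∈ d.edges, z ∈ S := by
    rcases hcase with h' | h'
    · have := prop_aux hS hEven hadj d'
        (by rw [← hdd]; exact hnodup)
        (by rw [← hdd]; intro z hz; exact List.mem_toFinset.mpr ((hmemEd z).mp hz))
        (by rw [← hdd]; exact hdegd)
        (h' ▸ he)
      rw [← hdd] at this
      exact this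
    · have hrevtrail : d.reverse.edges.Nodup := by
        rw [Walk.edges_reverse]; exact List.nodup_reverse.mpr hnodup
      have := prop_aux hS hEven hadj2 d''
        (by rw [← hrd]; exact hrevtrail)
        (by rw [← hrd]; intro z hz
            rw [Walk.edges_reverse, List.mem_reverse] at hz
            exact List.mem_toFinset.mpr ((hmemEd z).mp hz))
        (by rw [← hrd]; intro z hz
            rw [Walk.support_reverse, List.mem_reverse] at hz
            exact hdegd z hz)
        (h' ▸ he)
      rw [← hrd] at this
      intro z hz
      exact this z (by rw [Walk.edges_reverse, List.mem_reverse]; exact hz)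
  apply Finset.Subset.antisymm hS
  intro z hz
  exact hall z ((hmemEd z).mpr (List.mem_toFinset.mp hz))

lemma key_lemma [DecidableEq V] {r a b : V} {c : G.Walk r r} (hc : c.IsCycle)
    {A Q : G.Walk a b} (hA : IsPathOf G c A) (hQ : IsPathOf G c Q) (hab : a ≠ b) :
    Q.length = A.length ∨ Q.length + A.length = c.length := by
  set Ea := A.edges.toFinset with hEa
  set Eb := Q.edges.toFinset with hEb
  set Ec := c.edges.toFinset with hEc
  have hEac : Ea ⊆ Ec := fun z hz => List.mem_toFinset.mpr (hA.2 z (List.mem_toFinset.mp hz))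
  have hEbc : Eb ⊆ Ec := fun z hz => List.mem_toFinset.mpr (hQ.2 z (List.mem_toFinset.mp hz))
  have hcA : Ea.card = A.length := by
    rw [hEa, List.toFinset_card_of_nodup hA.1.isTrail.edges_nodup, Walk.length_edges]
  have hcQ : Eb.card = Q.length := by
    rw [hEb, List.toFinset_card_of_nodup hQ.1.isTrail.edges_nodup, Walk.length_edges]
  have hcC : Ec.card = c.length := by
    rw [hEc, List.toFinset_card_of_nodup hc.isTrail.edges_nodup, Walk.length_edges]
  set S := (Ea ∪ Eb) \ (Ea ∩ Eb) with hSdef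
  have hSE : S ⊆ Ec := by
    intro z hz
    rcases Finset.mem_union.mp (Finset.mem_sdiff.mp hz).1 with h | h
    · exact hEac h
    · exact hEbc h
  have hEven : ∀ w, Even (degC w S) := by
    intro w
    have hfil : S.filter (fun z => w ∈ z) =
        (Ea ∪ Eb).filter (fun z => w ∈ z) \ (Ea ∩ Eb).filter (fun z => w ∈ z) := by
      ext z
      simp only [hSdef, Finset.mem_filter, Finset.mem_sdiff, Finset.mem_union, Finset.mem_inter]
      tauto
    have hsub : (Ea ∩ Eb).filter (fun z => w ∈ z) ⊆ (Ea ∪ Eb).filter (fun z => w ∈ z) :=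
      Finset.filter_subset_filter _ (Finset.inter_subset_left.trans Finset.subset_union_left)
    have hdS : degC w S = degC w (Ea ∪ Eb) - degC w (Ea ∩ Eb) := by
      rw [degC, hfil, Finset.card_sdiff_of_subset hsub]; rfl
    have hUI : degC w (Ea ∪ Eb) + degC w (Ea ∩ Eb) = degC w Ea + degC w Eb := by
      unfold degC
      rw [Finset.filter_union, Finset.filter_inter_distrib]
      exact Finset.card_union_add_card_inter _ _
    have hIa : degC w (Ea ∩ Eb) ≤ degC w (Ea ∪ Eb) := degC_mono
      (Finset.inter_subset_left.trans Finset.subset_union_left)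
    have hpar : Even (degC w Ea + degC w Eb) := by
      rw [hEa, hEb, path_degC A hA.1 w, path_degC Q hQ.1 w]
      by_cases hend : w = a ∨ w = b
      · have hwA : w ∈ A.support := by
          rcases hend with rfl | rfl
          exacts [A.start_mem_support, A.end_mem_support]
        have hwQ : w ∈ Q.support := by
          rcases hend with rfl | rfl
          exacts [Q.start_mem_support, Q.end_mem_support]
        simp [hwA, hwQ, hend, hab]
      · by_cases h3 : w ∈ A.support <;> by_cases h4 : w ∈ Q.support <;>
          simp [h3, h4, hend, hab] <;> decide
    obtain ⟨k, hk⟩ := hpar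
    exact ⟨k - degC w (Ea ∩ Eb), by omega⟩
  rcases even_sub_cycle hc hSE hEven with h0 | hfull
  · left
    have heq : Ea = Eb := by
      have hsub : Ea ∪ Eb ⊆ Ea ∩ Eb := by
        rwa [← Finset.sdiff_eq_empty_iff_subset]
      apply Finset.Subset.antisymm
      · exact (Finset.subset_union_left.trans hsub).trans Finset.inter_subset_right
      · exact (Finset.subset_union_right.trans hsub).trans Finset.inter_subset_left
    rw [← hcA, ← hcQ, heq]
  · right
    have h1 : (Ea ∪ Eb).card ≤ Ec.card := Finset.card_le_card (Finset.union_subset hEac hEbc)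
    have h2 : S.card = (Ea ∪ Eb).card - (Ea ∩ Eb).card :=
      Finset.card_sdiff_of_subset (Finset.inter_subset_left.trans Finset.subset_union_left)
    have h3 := Finset.card_union_add_card_inter Ea Eb
    have h4 : S.card = Ec.card := by rw [hfull]
    have h5 : (Ea ∩ Eb).card ≤ (Ea ∪ Eb).card :=
      Finset.card_le_card (Finset.inter_subset_left.trans Finset.subset_union_left)
    omega

end AuxiliaryLemmas

theorem stmt4 (G : SimpleGraph V) {r u v : V} (c : G.Walk r r)
    (hC : IsShortestEvenHole G c) (P : G.Walk u v)
    (hworst : WorstCShortcut G c P) (hshallow : CShallow G c P)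
    (C1 C2 : G.Walk u v) (harc : ArcPair G c C1 C2) (hlt : C1.length < C2.length)
    (x y : V) (hx : s(u, x) ∈ C1.edges) (hy : s(v, y) ∈ C1.edges)
    (C3 : G.Walk x y) (hC3 : IsPathOf G C1 C3) :
    ∀ Pxy : G.Walk x y, Pxy.IsPath → C3.length ≤ Pxy.length := by
  classical
  intro Pxy hPxy
  by_contra hcon0
  push_neg at hcon0
  obtain ⟨⟨⟨⟨hcyc, hind⟩, hlen4⟩, heven⟩, hmin⟩ := hC
  obtain ⟨hC1of, hC2of, hsum, hcover⟩ := harc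
  obtain ⟨⟨hPpath, huv, hnadj, huc, hvc⟩, ⟨hP2, hPled, hP4⟩, hPbad, hPworst⟩ := hworst
  have hsh1 := hshallow.1
  have hn3 := hcyc.three_le_length
  have huxadj : G.Adj u x := C1.adj_of_mem_edges hx
  have hvyadj : G.Adj v y := C1.adj_of_mem_edges hy
  have hux : u ≠ x := huxadj.ne
  have hvy : v ≠ y := hvyadj.ne
  have huy : u ≠ y := by rintro rfl; exact hnadj (C1.adj_of_mem_edges hy).symm
  have hxv : x ≠ v := by rintro rfl; exact hnadj huxadj
  have hxy : x ≠ y := by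
    rintro rfl
    have := loop_isPath_length hC3.1
    omega
  have hC3sub : C3.edges.toFinset ⊆ C1.edges.toFinset :=
    fun z hz => List.mem_toFinset.mpr (hC3.2 z (List.mem_toFinset.mp hz))
  have hdegu : degC u C1.edges.toFinset = 1 := by
    rw [path_degC C1 hC1of.1 u]
    simp [C1.start_mem_support, huv]
  have hdegv : degC v C1.edges.toFinset = 1 := by
    rw [path_degC C1 hC1of.1 v]
    simp [C1.end_mem_support, huv, Ne.symm huv]
  have hunot : u ∉ C3.support := by
    intro hmem
    have h2' := path_degC C3 hC3.1 u
    rw [if_pos hmem, if_neg (by push_neg; exact ⟨hux, huy⟩)] at h2'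
    have h3' := degC_mono (w := u) hC3sub
    omega
  have hvnot : v ∉ C3.support := by
    intro hmem
    have h2' := path_degC C3 hC3.1 v
    rw [if_pos hmem, if_neg (by push_neg; exact ⟨Ne.symm hxv, hvy⟩)] at h2'
    have h3' := degC_mono (w := v) hC3sub
    omega
  have hedne : s(u, x) ≠ s(v, y) := by
    intro h
    rcases Sym2.eq_iff.mp h with ⟨h1, _⟩ | ⟨h1, _⟩
    · exact huv h1
    · exact huy h1
  have hC3len : C3.length + 2 ≤ C1.length := by
    have hpairsub : ({s(u, x), s(v, y)} : Finset (Sym2 V)) ⊆ C1.edges.toFinset := by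
      intro z hz
      rcases Finset.mem_insert.mp hz with rfl | hz
      · exact List.mem_toFinset.mpr hx
      · rw [Finset.mem_singleton.mp hz]; exact List.mem_toFinset.mpr hy
    have hsub2 : C3.edges.toFinset ⊆ C1.edges.toFinset \ {s(u, x), s(v, y)} := by
      intro z hz
      rw [Finset.mem_sdiff]
      refine ⟨hC3sub hz, ?_⟩
      intro hzp
      rcases Finset.mem_insert.mp hzp with rfl | hzp
      · exact hunot (C3.fst_mem_support_of_mem_edges (List.mem_toFinset.mp hz))
      · rw [Finset.mem_singleton.mp hzp] at hz
        exact hvnot (C3.fst_mem_support_of_mem_edges (List.mem_toFinset.mp hz))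
    have hcard := Finset.card_le_card hsub2
    rw [Finset.card_sdiff_of_subset hpairsub, Finset.card_pair hedne] at hcard
    have h2card : 2 ≤ C1.edges.toFinset.card := by
      calc 2 = ({s(u, x), s(v, y)} : Finset (Sym2 V)).card := (Finset.card_pair hedne).symm
        _ ≤ _ := Finset.card_le_card hpairsub
    rw [List.toFinset_card_of_nodup hC3.1.isTrail.edges_nodup, Walk.length_edges] at hcard
    rw [List.toFinset_card_of_nodup hC1of.1.isTrail.edges_nodup, Walk.length_edges] at hcard
    rw [List.toFinset_card_of_nodup hC1of.1.isTrail.edges_nodup, Walk.length_edges] at h2card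
    omega
  have hcduv : C1.length ≤ cycleDist G c u v := by
    simp only [cycleDist]
    refine le_csInf ⟨C1.length, C1, hC1of, rfl⟩ ?_
    rintro m ⟨Q, hQ, rfl⟩
    rcases key_lemma hcyc hC1of hQ huv with h | h <;> omega
  have hxc : x ∈ c.support := c.snd_mem_support_of_mem_edges (hC1of.2 _ hx)
  have hyc : y ∈ c.support := c.snd_mem_support_of_mem_edges (hC1of.2 _ hy)
  have hC3ofc : IsPathOf G c C3 := ⟨hC3.1, fun e he => hC1of.2 e (hC3.2 e he)⟩
  have hnxy : ¬ G.Adj x y := by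
    intro hadj
    have hedge : s(x, y) ∈ c.edges := hind x y hxc hyc hadj
    have hW1 : IsPathOf G c (Walk.cons hadj Walk.nil) := by
      refine ⟨?_, ?_⟩
      · rw [Walk.cons_isPath_iff]
        refine ⟨Walk.IsPath.nil, ?_⟩
        simp [Ne.symm hxy, hxy]
      · intro e he
        simp only [Walk.edges_cons, Walk.edges_nil, List.mem_cons, List.not_mem_nil,
          or_false] at he
        rwa [he]
    rcases key_lemma hcyc hC3ofc hW1 hxy with h | h
    · simp only [Walk.length_cons, Walk.length_nil] at h
      have hPxy0 : Pxy.length = 0 := by omega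
      exact hxy (Walk.nil_iff_length_eq.mpr hPxy0).eq
    · simp only [Walk.length_cons, Walk.length_nil] at h
      omega
  have hPxy2 : 2 ≤ Pxy.length := by
    by_contra hlt2
    push_neg at hlt2
    have hcases : Pxy.length = 0 ∨ Pxy.length = 1 := by omega
    rcases hcases with h0 | h1
    · exact hxy (Walk.nil_iff_length_eq.mpr h0).eq
    · have hnil : ¬ Pxy.Nil := by rw [Walk.not_nil_iff_lt_length]; omega
      obtain ⟨z, hadj, q, hq⟩ := Walk.not_nil_iff.mp hnil
      have hq0 : q.length = 0 := by
        have := congrArg Walk.length hq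
        simp only [Walk.length_cons] at this
        omega
      have hz : z = y := (Walk.nil_iff_length_eq.mpr hq0).eq
      subst hz
      exact hnxy hadj
  have hcdxy : Pxy.length + 1 ≤ cycleDist G c x y := by
    simp only [cycleDist]
    refine le_csInf ⟨C3.length, C3, hC3ofc, rfl⟩ ?_
    rintro m ⟨Q, hQ, rfl⟩
    rcases key_lemma hcyc hC3ofc hQ hxy with h | h <;> omega
  have hsetup : ShortcutSetup G c Pxy := ⟨hPxy, hxy, hnxy, hxc, hyc⟩
  have hshort : CShortcut G c Pxy := ⟨hPxy2, by omega, by omega⟩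
  have hbadxy : ¬ CGood G c Pxy := by
    rintro ⟨Q, hQof, r', w, hw, hsupp⟩
    have hwlen : w.length = c.length := by
      have h1 := hw.2 r c ⟨⟨⟨hcyc, hind⟩, hlen4⟩, heven⟩
      have h2 := hmin r' w hw.1
      omega
    have hwcyc : w.IsCycle := hw.1.1.1.1
    have hwcard : w.support.toFinset.card = w.length := cycle_support_card_s4 hwcyc
    have hcoe : ∀ {a b : V} (W : G.Walk a b), (W.support.toFinset : Set V) = suppSet W := by
      intro a b W; ext z; simp [suppSet]
    have hfin : w.support.toFinset = Pxy.support.toFinset ∪ Q.support.toFinset := by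
      apply Finset.coe_injective
      rw [Finset.coe_union, hcoe, hcoe, hcoe, hsupp]
    have hQlen : Q.length + C3.length ≤ c.length := by
      rcases key_lemma hcyc hC3ofc hQof hxy with h | h <;> omega
    have hPxycard : Pxy.support.toFinset.card = Pxy.length + 1 := by
      rw [List.toFinset_card_of_nodup hPxy.support_nodup, Walk.length_support]
    have hQcard : Q.support.toFinset.card = Q.length + 1 := by
      rw [List.toFinset_card_of_nodup hQof.1.support_nodup, Walk.length_support]
    have hinter : 2 ≤ (Pxy.support.toFinset ∩ Q.support.toFinset).card := by
      have hss : ({x, y} : Finset V) ⊆ Pxy.support.toFinset ∩ Q.support.toFinset := by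
        intro z hz
        rcases Finset.mem_insert.mp hz with rfl | hz
        · exact Finset.mem_inter.mpr ⟨List.mem_toFinset.mpr Pxy.start_mem_support,
            List.mem_toFinset.mpr Q.start_mem_support⟩
        · rw [Finset.mem_singleton.mp hz]
          exact Finset.mem_inter.mpr ⟨List.mem_toFinset.mpr Pxy.end_mem_support,
            List.mem_toFinset.mpr Q.end_mem_support⟩
      calc 2 = ({x, y} : Finset V).card := (Finset.card_pair hxy).symm
        _ ≤ _ := Finset.card_le_card hss
    have huni := Finset.card_union_add_card_inter Pxy.support.toFinset Q.support.toFinset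
    rw [← hfin, hwcard, hwlen] at huni
    omega
  rcases hPworst x y Pxy hsetup hshort hbadxy with h | ⟨h, _⟩ <;> omega
end

section
/- Let C be a shortest even hole of a graph G, let u and v be distinct vertices of C, let the uv-path P of G be a C-shallow worst C-shortcut, and let C1, C2 be the uv-paths of C with ‖C1‖ ≤ ‖C2‖. Let x (respectively, y) be the neighbor of u (respectively, v) in C1. Then every shortest xy-path P_xy of G satisfies ‖P_xy‖ = ‖C1‖ − 2 and G[P_xy ∪ C2] is a shortest even hole of G. -/
open SimpleGraph

variable {V : Type*}

section Aux
namespace SimpleGraph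
namespace Walk

variable {V : Type*} {G : SimpleGraph V}

lemma mem_support_of_mem_edges'' {a b z : V} (p : G.Walk a b) {e : Sym2 V}
    (he : e ∈ p.edges) (hz : z ∈ e) : z ∈ p.support := by
  induction e with
  | _ x y =>
    rcases Sym2.mem_iff.1 hz with rfl | rfl
    · exact p.fst_mem_support_of_mem_edges he
    · exact p.snd_mem_support_of_mem_edges he

lemma IsPath.loop_eq_nil {a : V} {p : G.Walk a a} (hp : p.IsPath) : p = Walk.nil := by
  cases p with
  | nil => rfl
  | cons h q =>
    exfalso
    have : a ∉ q.support := ((Walk.cons_isPath_iff _ _).1 hp).2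
    exact this q.end_mem_support

/-- In a path, any two edges containing the final endpoint are equal. -/
lemma IsPath.edge_end_unique {a b : V} {p : G.Walk a b} (hp : p.IsPath) (hab : a ≠ b) :
    ∀ e ∈ p.edges, b ∈ e → ∀ e' ∈ p.edges, b ∈ e' → e = e' := by
  induction p with
  | nil => intro e he; simp at he
  | @cons a w b h q ih =>
    intro e he hbe e' he' hbe'
    rw [Walk.edges_cons, List.mem_cons] at he he'
    have hq : q.IsPath := hp.of_cons
    rcases he with rfl | he
    · rcases he' with rfl | he'
      · rfl
      · exfalso
        rcases Sym2.mem_iff.1 hbe with rfl | rfl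
        · exact hab rfl
        · rw [hq.loop_eq_nil] at he'; simp at he'
    · rcases he' with rfl | he'
      · exfalso
        rcases Sym2.mem_iff.1 hbe' with rfl | rfl
        · exact hab rfl
        · rw [hq.loop_eq_nil] at he; simp at he
      · have hwb : w ≠ b := by
          rintro rfl
          rw [hq.loop_eq_nil] at he; simp at he
        exact ih hq hwb e he hbe e' he' hbe'

/-- Decompose a path along an edge at its initial endpoint. -/
lemma IsPath.first_edge_decomp {a b z : V} {p : G.Walk a b} (hp : p.IsPath)
    (he : s(a, z) ∈ p.edges) : ∃ (h : G.Adj a z) (q : G.Walk z b), p = Walk.cons h q := by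
  cases p with
  | nil => simp at he
  | @cons a w b h q =>
    rw [Walk.edges_cons, List.mem_cons] at he
    rcases he with he | he
    · rw [Sym2.eq_iff] at he
      rcases he with ⟨-, rfl⟩ | ⟨rfl, rfl⟩
      · exact ⟨h, q, rfl⟩
      · exact absurd h (G.irrefl)
    · exfalso
      have : a ∈ q.support := q.mem_support_of_mem_edges'' he (by simp)
      exact ((Walk.cons_isPath_iff _ _).1 hp).2 this

lemma getVert_takeUntil' [DecidableEq V] {a b z : V} (p : G.Walk a b) (h : z ∈ p.support) :
    p.getVert (p.takeUntil z h).length = z := by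
  have h1 : ((p.takeUntil z h).append (p.dropUntil z h)).getVert (p.takeUntil z h).length = z := by
    rw [Walk.getVert_append]
    simp
  rwa [Walk.take_spec] at h1

lemma length_takeUntil_add_dropUntil [DecidableEq V] {a b z : V} (p : G.Walk a b) (h : z ∈ p.support) :
    (p.takeUntil z h).length + (p.dropUntil z h).length = p.length := by
  have := congrArg Walk.length (p.take_spec h)
  rwa [Walk.length_append] at this

lemma edge_getVert_mem {a b : V} (p : G.Walk a b) {i : ℕ} (hi : i < p.length) :
    s(p.getVert i, p.getVert (i + 1)) ∈ p.edges := by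
  induction p generalizing i with
  | nil => simp at hi
  | @cons a w b h q ih =>
    cases i with
    | zero =>
      rw [Walk.getVert_zero, Walk.getVert_cons_succ]
      simp
    | succ n =>
      rw [Walk.getVert_cons_succ, Walk.getVert_cons_succ]
      rw [Walk.edges_cons, List.mem_cons]
      exact Or.inr (ih (by simpa [Nat.succ_lt_succ_iff] using hi))

lemma firstEdge_head? {a b : V} (p : G.Walk a b) (hl : 0 < p.length) :
    p.edges.head? = some s(a, p.getVert 1) := by
  cases p with
  | nil => simp at hl
  | @cons a w b h q => rw [Walk.getVert_cons _ _ one_ne_zero, Nat.sub_self, Walk.getVert_zero]; rfl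

lemma firstEdge_mem {a b : V} (p : G.Walk a b) (hl : 0 < p.length) :
    s(a, p.getVert 1) ∈ p.edges := by
  have := p.edge_getVert_mem hl
  rwa [Walk.getVert_zero] at this

end Walk
end SimpleGraph
end Aux
section Aux2
namespace SimpleGraph
namespace Walk

variable {V : Type*} {G : SimpleGraph V}

/-- In a cycle, there are at most two edges through any vertex. -/
lemma IsCycle.edge_two {r w : V} {c : G.Walk r r} (hc : c.IsCycle)
    {e₁ e₂ e₃ : Sym2 V} (h1 : e₁ ∈ c.edges) (h2 : e₂ ∈ c.edges) (h3 : e₃ ∈ c.edges)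
    (hw1 : w ∈ e₁) (hw2 : w ∈ e₂) (hw3 : w ∈ e₃) (hne : e₁ ≠ e₂) : e₃ = e₁ ∨ e₃ = e₂ := by
  classical
  have hwsup : w ∈ c.support := c.mem_support_of_mem_edges'' h1 hw1
  have hmem : ∀ e : Sym2 V, e ∈ (c.rotate w hwsup).edges ↔ e ∈ c.edges := by
    intro e
    exact (c.rotate_edges w hwsup).perm.mem_iff
  have key : ∃ f g : Sym2 V, ∀ e ∈ c.edges, w ∈ e → e = f ∨ e = g := by
    have hcw : (c.rotate w hwsup).IsCycle := hc.rotate hwsup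
    set cw := c.rotate w hwsup with hcwdef
    clear_value cw
    cases cw with
    | nil => exact absurd rfl hcw.ne_nil
    | @cons w w₂ w h q =>
      have hq : q.IsPath := ((Walk.cons_isCycle_iff q h).1 hcw).1
      have hw2w : w₂ ≠ w := fun hh => G.irrefl (hh ▸ h)
      by_cases hex : ∃ e ∈ q.edges, w ∈ e
      · obtain ⟨g, hg, hgw⟩ := hex
        refine ⟨s(w, w₂), g, fun e hec hwe => ?_⟩
        have he' : e ∈ s(w, w₂) :: q.edges := by
          have := (hmem e).2 hec
          rwa [Walk.edges_cons] at this
        rcases List.mem_cons.1 he' with rfl | he''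
        · exact Or.inl rfl
        · exact Or.inr (hq.edge_end_unique hw2w e he'' hwe g hg hgw)
      · refine ⟨s(w, w₂), s(w, w₂), fun e hec hwe => ?_⟩
        have he' : e ∈ s(w, w₂) :: q.edges := by
          have := (hmem e).2 hec
          rwa [Walk.edges_cons] at this
        rcases List.mem_cons.1 he' with rfl | he''
        · exact Or.inl rfl
        · exact absurd ⟨e, he'', hwe⟩ hex
  obtain ⟨f, g, hfg⟩ := key
  rcases hfg e₁ h1 hw1 with rfl | rfl <;> rcases hfg e₂ h2 hw2 with h2' | h2' <;>
    rcases hfg e₃ h3 hw3 with h3' | h3' <;> subst h3' <;> tauto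

/-- Two paths inside a cycle with the same endpoints and the same first edge are equal. -/
lemma IsCycle.path_unique_of_head {r : V} {c : G.Walk r r} (hc : c.IsCycle) :
    ∀ {s t : V} (A B : G.Walk s t), A.IsPath → B.IsPath →
      (∀ e ∈ A.edges, e ∈ c.edges) → (∀ e ∈ B.edges, e ∈ c.edges) →
      A.edges.head? = B.edges.head? → A = B := by
  intro s t A
  induction A with
  | nil =>
    intro B hA hB _ _ hhead
    exact (hB.loop_eq_nil).symm
  | @cons s w t h A' ih =>
    intro B hA hB hAe hBe hhead
    cases B with
    | nil =>
      exfalso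
      have := hA.loop_eq_nil
      simp at this
    | @cons s w' t h' B' =>
      have hww' : w = w' := by
        simp only [Walk.edges_cons, List.head?_cons, Option.some.injEq, Sym2.eq_iff] at hhead
        rcases hhead with ⟨-, rfl⟩ | ⟨h1, h2⟩
        · rfl
        · exact absurd h2.symm (G.ne_of_adj h)
      subst hww'
      have hA' : A'.IsPath := hA.of_cons
      have hB' : B'.IsPath := hB.of_cons
      have hsA : s ∉ A'.support := ((Walk.cons_isPath_iff _ _).1 hA).2
      have hsB : s ∉ B'.support := ((Walk.cons_isPath_iff _ _).1 hB).2
      have hA'e : ∀ e ∈ A'.edges, e ∈ c.edges := fun e he => hAe e (by simp [he])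
      have hB'e : ∀ e ∈ B'.edges, e ∈ c.edges := fun e he => hBe e (by simp [he])
      have key : A' = B' := by
        by_cases hwt : w = t
        · subst hwt
          rw [hA'.loop_eq_nil, hB'.loop_eq_nil]
        · cases A' with
          | nil => exact absurd rfl hwt
          | @cons w z t hz A'' =>
            cases B' with
            | nil => exact absurd rfl hwt
            | @cons w z' t hz' B'' =>
              have heA : s(w, z) ∈ c.edges := hA'e _ (by simp)
              have heB : s(w, z') ∈ c.edges := hB'e _ (by simp)
              have he1 : s(s, w) ∈ c.edges := hAe _ (by simp)
              have hne1A : s(s, w) ≠ s(w, z) := by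
                intro hh
                rw [Sym2.eq_iff] at hh
                rcases hh with ⟨rfl, -⟩ | ⟨rfl, -⟩
                · exact G.irrefl h
                · apply hsA
                  rw [Walk.support_cons]
                  exact List.mem_cons.2 (Or.inr A''.start_mem_support)
              have hne1B : s(s, w) ≠ s(w, z') := by
                intro hh
                rw [Sym2.eq_iff] at hh
                rcases hh with ⟨rfl, -⟩ | ⟨rfl, -⟩
                · exact G.irrefl h
                · apply hsB
                  rw [Walk.support_cons]
                  exact List.mem_cons.2 (Or.inr B''.start_mem_support)
              have hzz : z = z' := by
                have := hc.edge_two (w := w) he1 heA heB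
                  (Sym2.mem_mk_right _ _) (Sym2.mem_mk_left _ _) (Sym2.mem_mk_left _ _) hne1A
                rcases this with hh | hh
                · exact absurd hh hne1B.symm
                · rw [Sym2.eq_iff] at hh
                  rcases hh with ⟨-, rfl⟩ | ⟨rfl, -⟩
                  · rfl
                  · exact absurd hz (G.irrefl)
              subst hzz
              exact ih (Walk.cons hz' B'') hA' hB' hA'e hB'e rfl
      subst key
      rfl

end Walk
end SimpleGraph
end Aux2
section Aux3
namespace SimpleGraph
namespace Walk

variable {V : Type*} {G : SimpleGraph V}

lemma mem_support_tail_of_closed {r : V} (c : G.Walk r r) (hnn : c ≠ Walk.nil) :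
    ∀ z ∈ c.support, z ∈ c.support.tail := by
  cases c with
  | nil => exact absurd rfl hnn
  | cons h q =>
    intro z hz
    rw [Walk.support_cons] at hz ⊢
    rw [List.tail_cons]
    rcases List.mem_cons.1 hz with rfl | hz'
    · exact q.end_mem_support
    · exact hz'

/-- The two arcs of a cycle between two distinct vertices on it. -/
lemma IsCycle.arcs [DecidableEq V] {r : V} {c : G.Walk r r} (hc : c.IsCycle) {s t : V}
    (hs : s ∈ c.support) (ht : t ∈ c.support) (hst : s ≠ t) :
    ∃ (A B : G.Walk s t), A.IsPath ∧ B.IsPath ∧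
      (∀ e ∈ A.edges, e ∈ c.edges) ∧ (∀ e ∈ B.edges, e ∈ c.edges) ∧
      A.length + B.length = c.length ∧
      (∀ z, z ∈ A.support → z ∈ B.support → z = s ∨ z = t) ∧
      (∀ D : G.Walk s t, D.IsPath → (∀ e ∈ D.edges, e ∈ c.edges) → D = A ∨ D = B) := by
  have hcw : (c.rotate s hs).IsCycle := hc.rotate hs
  have ht' : t ∈ (c.rotate s hs).support := by
    rw [(c.rotate s hs).support_eq_cons]
    refine List.mem_cons.2 (Or.inr ?_)
    rw [(c.support_rotate s hs).mem_iff]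
    exact c.mem_support_tail_of_closed hc.ne_nil t ht
  set cw := c.rotate s hs with hcwdef
  have hmemE : ∀ e : Sym2 V, e ∈ cw.edges ↔ e ∈ c.edges := fun e =>
    (c.rotate_edges s hs).perm.mem_iff
  have hlencw : cw.length = c.length := by
    rw [hcwdef]
    show ((c.dropUntil s hs).append (c.takeUntil s hs)).length = c.length
    rw [Walk.length_append, Nat.add_comm, c.length_takeUntil_add_dropUntil hs]
  set A := cw.takeUntil t ht' with hAdef
  set Bd := cw.dropUntil t ht' with hBdef
  have hspec : A.append Bd = cw := cw.take_spec ht'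
  have hlenAB : A.length + Bd.length = c.length := by
    have h1 := congrArg Walk.length hspec
    rw [Walk.length_append] at h1
    omega
  have hedges : cw.edges = A.edges ++ Bd.edges := by rw [← hspec, Walk.edges_append]
  have hsup : cw.support = A.support ++ Bd.support.tail := by rw [← hspec, Walk.support_append]
  have htails : cw.support.tail = A.support.tail ++ Bd.support.tail := by
    have h1 : s :: cw.support.tail = (s :: A.support.tail) ++ Bd.support.tail := by
      rw [← A.support_eq_cons, ← hsup, ← cw.support_eq_cons]
    exact (List.cons.inj h1).2
  have hndcw : cw.support.tail.Nodup := hcw.support_nodup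
  rw [htails, List.nodup_append'] at hndcw
  obtain ⟨hndA, hndBd, hdisj⟩ := hndcw
  have hecw : cw.edges.Nodup := hcw.isCircuit.isTrail.edges_nodup
  rw [hedges, List.nodup_append'] at hecw
  obtain ⟨hndeA, hndeBd, hdisjE⟩ := hecw
  have hsBd : s ∈ Bd.support.tail := by
    have h1 : s ∈ Bd.support := Bd.end_mem_support
    rw [Bd.support_eq_cons] at h1
    rcases List.mem_cons.1 h1 with h2 | h2
    · exact absurd h2 hst
    · exact h2
  have hsA : s ∉ A.support.tail := fun h => hdisj h hsBd
  have hApath : A.IsPath := IsPath.mk' (by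
    rw [A.support_eq_cons]; exact List.nodup_cons.2 ⟨hsA, hndA⟩)
  have htA : t ∈ A.support.tail := by
    have h1 : t ∈ A.support := A.end_mem_support
    rw [A.support_eq_cons] at h1
    rcases List.mem_cons.1 h1 with h2 | h2
    · exact absurd h2 hst.symm
    · exact h2
  have htBd : t ∉ Bd.support.tail := fun h => hdisj htA h
  have hBdpath : Bd.IsPath := IsPath.mk' (by
    rw [Bd.support_eq_cons]; exact List.nodup_cons.2 ⟨htBd, hndBd⟩)
  have hAe : ∀ e ∈ A.edges, e ∈ c.edges := fun e he =>
    (hmemE e).1 (by rw [hedges]; exact List.mem_append_left _ he)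
  have hBe : ∀ e ∈ Bd.reverse.edges, e ∈ c.edges := by
    intro e he
    rw [Walk.edges_reverse, List.mem_reverse] at he
    exact (hmemE e).1 (by rw [hedges]; exact List.mem_append_right _ he)
  refine ⟨A, Bd.reverse, hApath, hBdpath.reverse, hAe, hBe, ?_, ?_, ?_⟩
  · rw [Walk.length_reverse]; exact hlenAB
  · intro z hzA hzB
    by_contra hcon
    push_neg at hcon
    have hzA' : z ∈ A.support.tail := by
      rw [A.support_eq_cons] at hzA
      rcases List.mem_cons.1 hzA with h2 | h2
      · exact absurd h2 hcon.1
      · exact h2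
    have hzBd : z ∈ Bd.support := by
      rw [Walk.support_reverse, List.mem_reverse] at hzB
      exact hzB
    have hzBd' : z ∈ Bd.support.tail := by
      rw [Bd.support_eq_cons] at hzBd
      rcases List.mem_cons.1 hzBd with h2 | h2
      · exact absurd h2 hcon.2
      · exact h2
    exact hdisj hzA' hzBd'
  · intro D hD hDe
    set B := Bd.reverse with hBdef2
    have hBpath : B.IsPath := hBdpath.reverse
    have hAlen : 0 < A.length := by
      rcases Nat.eq_zero_or_pos A.length with h0 | h0
      · exact absurd (Walk.eq_of_length_eq_zero h0) hst
      · exact h0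
    have hBlen : 0 < B.length := by
      rcases Nat.eq_zero_or_pos B.length with h0 | h0
      · exact absurd (Walk.eq_of_length_eq_zero h0) hst
      · exact h0
    have hDlen : 0 < D.length := by
      rcases Nat.eq_zero_or_pos D.length with h0 | h0
      · exact absurd (Walk.eq_of_length_eq_zero h0) hst
      · exact h0
    have heA : s(s, A.getVert 1) ∈ c.edges := hAe _ (A.firstEdge_mem hAlen)
    have heB : s(s, B.getVert 1) ∈ c.edges := hBe _ (B.firstEdge_mem hBlen)
    have heD : s(s, D.getVert 1) ∈ c.edges := hDe _ (D.firstEdge_mem hDlen)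
    have hAB : A ≠ B := by
      intro hEq
      have h1 : s(s, A.getVert 1) ∈ A.edges := A.firstEdge_mem hAlen
      have h2 : s(s, A.getVert 1) ∈ B.edges := by rw [← hEq]; exact h1
      rw [hBdef2, Walk.edges_reverse, List.mem_reverse] at h2
      exact hdisjE h1 h2
    have hne12 : s(s, A.getVert 1) ≠ s(s, B.getVert 1) := by
      intro hEq
      apply hAB
      apply hc.path_unique_of_head A B hApath hBpath hAe hBe
      rw [A.firstEdge_head? hAlen, B.firstEdge_head? hBlen, hEq]
    have h2 := hc.edge_two (w := s) heA heB heD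
      (Sym2.mem_mk_left _ _) (Sym2.mem_mk_left _ _) (Sym2.mem_mk_left _ _) hne12
    rcases h2 with h | h
    · left
      apply hc.path_unique_of_head D A hD hApath hDe hAe
      rw [D.firstEdge_head? hDlen, A.firstEdge_head? hAlen, h]
    · right
      apply hc.path_unique_of_head D B hD hBpath hDe hBe
      rw [D.firstEdge_head? hDlen, B.firstEdge_head? hBlen, h]

end Walk
end SimpleGraph
end Aux3
section Aux4
namespace SimpleGraph
variable {V : Type*} {G : SimpleGraph V}

lemma suppSet_eq_coe [DecidableEq V] {u v : V} (w : G.Walk u v) :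
    suppSet w = ↑w.support.toFinset := by
  ext z; simp [suppSet]

lemma mem_suppSet {u v z : V} {w : G.Walk u v} : z ∈ suppSet w ↔ z ∈ w.support := Iff.rfl

lemma ncard_suppSet_cycle {r : V} {w : G.Walk r r} (hw : w.IsCycle) :
    (suppSet w).ncard = w.length := by
  classical
  rw [suppSet_eq_coe, Set.ncard_coe_finset]
  cases w with
  | nil => exact absurd rfl hw.ne_nil
  | @cons r w' r h q =>
    have hnd := hw.support_nodup
    rw [Walk.support_cons, List.tail_cons] at hnd
    rw [Walk.support_cons]
    have hr : r ∈ q.support := q.end_mem_support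
    rw [List.toFinset_cons, Finset.insert_eq_self.2 (List.mem_toFinset.2 hr)]
    rw [List.toFinset_card_of_nodup hnd, Walk.length_support, Walk.length_cons]

lemma ncard_union_suppSet_le {s t : V} (p q : G.Walk s t) (hst : s ≠ t) :
    (suppSet p ∪ suppSet q).ncard + 2 ≤ (p.length + 1) + (q.length + 1) := by
  classical
  rw [suppSet_eq_coe, suppSet_eq_coe, ← Finset.coe_union, Set.ncard_coe_finset]
  have h1 : ({s, t} : Finset V) ⊆ p.support.toFinset ∩ q.support.toFinset := by
    intro z hz
    rcases Finset.mem_insert.1 hz with rfl | hz'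
    · exact Finset.mem_inter.2 ⟨List.mem_toFinset.2 p.start_mem_support,
        List.mem_toFinset.2 q.start_mem_support⟩
    · rw [Finset.mem_singleton] at hz'
      subst hz'
      exact Finset.mem_inter.2 ⟨List.mem_toFinset.2 p.end_mem_support,
        List.mem_toFinset.2 q.end_mem_support⟩
  have h2 : 2 ≤ (p.support.toFinset ∩ q.support.toFinset).card := by
    calc 2 = ({s, t} : Finset V).card := (Finset.card_pair hst).symm
    _ ≤ _ := Finset.card_le_card h1
  have h3 := Finset.card_union_add_card_inter p.support.toFinset q.support.toFinset
  have h4 : p.support.toFinset.card ≤ p.length + 1 := by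
    calc p.support.toFinset.card ≤ p.support.length := p.support.toFinset_card_le
    _ = p.length + 1 := p.length_support
  have h5 : q.support.toFinset.card ≤ q.length + 1 := by
    calc q.support.toFinset.card ≤ q.support.length := q.support.toFinset_card_le
    _ = q.length + 1 := q.length_support
  omega

end SimpleGraph
end Aux4
section Aux5
namespace SimpleGraph
variable {V : Type*} {G : SimpleGraph V}

lemma edges_subset_of_induced {r' : V} {w : G.Walk r' r'}
    (hindw : ∀ a b : V, a ∈ w.support → b ∈ w.support → G.Adj a b → s(a, b) ∈ w.edges)
    {s t : V} (p : G.Walk s t) (hsub : ∀ z ∈ p.support, z ∈ w.support) :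
    ∀ e ∈ p.edges, e ∈ w.edges := by
  intro e
  induction e with
  | _ z1 z2 =>
    intro he
    exact hindw _ _ (hsub _ (p.fst_mem_support_of_mem_edges he))
      (hsub _ (p.snd_mem_support_of_mem_edges he)) (p.adj_of_mem_edges he)

lemma _root_.SimpleGraph.Walk.IsPath.concat' {s t w : V} {p : G.Walk s t}
    (hp : p.IsPath) (h : G.Adj t w) (hw : w ∉ p.support) : (p.concat h).IsPath := by
  apply Walk.IsPath.mk'
  rw [Walk.support_concat, List.nodup_append']
  exact ⟨hp.support_nodup, List.nodup_singleton _, by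
    intro z hz hz'
    rw [List.mem_singleton] at hz'
    subst hz'
    exact hw hz⟩

end SimpleGraph
end Aux5
section Aux6
namespace SimpleGraph
namespace Walk
variable {V : Type*} {G : SimpleGraph V}

lemma exists_edge_of_mem_support {s t z : V} (p : G.Walk s t) (hl : 0 < p.length)
    (hz : z ∈ p.support) : ∃ e ∈ p.edges, z ∈ e := by
  induction p with
  | nil => simp at hl
  | @cons a w b h q ih =>
    rw [Walk.support_cons] at hz
    rcases List.mem_cons.1 hz with rfl | hz'
    · exact ⟨s(z, w), by simp, by simp⟩
    · rcases Nat.eq_zero_or_pos q.length with h0 | h0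
      · have hq : q.support = [w] := by
          cases q with
          | nil => rfl
          | cons h' q' => simp [Walk.length_cons] at h0
        rw [hq, List.mem_singleton] at hz'
        subst hz'
        exact ⟨s(a, z), by simp, by simp⟩
      · obtain ⟨e, he, hze⟩ := ih h0 hz'
        exact ⟨e, by rw [Walk.edges_cons]; exact List.mem_cons.2 (Or.inr he), hze⟩

end Walk
end SimpleGraph
end Aux6

theorem stmt8 (G : SimpleGraph V) {r u v : V} (c : G.Walk r r)
    (hC : IsShortestEvenHole G c) (P : G.Walk u v)
    (hworst : WorstCShortcut G c P) (hshallow : CShallow G c P)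
    (C1 C2 : G.Walk u v) (harc : ArcPair G c C1 C2) (hle : C1.length ≤ C2.length)
    (x y : V) (hx : s(u, x) ∈ C1.edges) (hy : s(v, y) ∈ C1.edges) :
    ∀ Pxy : G.Walk x y, IsShortestPath G Pxy →
      Pxy.length + 2 = C1.length ∧ IsShortestEvenHoleOn G (suppSet Pxy ∪ suppSet C2) := by
  classical
  obtain ⟨⟨⟨⟨hcyc, hind⟩, h4len⟩, heven⟩, hmin⟩ := hC
  obtain ⟨⟨hPpath, huv, hnadj, hu, hv⟩, ⟨hp2, hpd, hp4⟩, hPbad, hwmin⟩ := hworst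
  obtain ⟨hsh1, hsh2⟩ := hshallow
  have harcc := harc
  obtain ⟨⟨hC1p, hC1e⟩, ⟨hC2p, hC2e⟩, hsum, hcov⟩ := harcc
  -- basic adjacencies
  have hadj_ux : G.Adj u x := C1.adj_of_mem_edges hx
  have hadj_vy : G.Adj v y := C1.adj_of_mem_edges hy
  have hadj_yv : G.Adj y v := hadj_vy.symm
  have hxu : x ≠ u := (G.ne_of_adj hadj_ux).symm
  have hxv : x ≠ v := by rintro rfl; exact hnadj hadj_ux
  have hyv : y ≠ v := (G.ne_of_adj hadj_vy).symm
  have hyu : y ≠ u := by rintro rfl; exact hnadj hadj_vy.symm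
  have hxc : s(u, x) ∈ c.edges := hC1e _ hx
  have hyc : s(v, y) ∈ c.edges := hC1e _ hy
  have hxsup : x ∈ c.support := c.mem_support_of_mem_edges'' hxc (Sym2.mem_mk_right _ _)
  have hysup : y ∈ c.support := c.mem_support_of_mem_edges'' hyc (Sym2.mem_mk_right _ _)
  -- decompose C1 as u -- x -- ... -- y -- v
  obtain ⟨h_ux, C1x, hC1eq⟩ := hC1p.first_edge_decomp hx
  have hC1pc := hC1p
  rw [hC1eq] at hC1pc
  have hC1xp : C1x.IsPath := hC1pc.of_cons
  have huC1x : u ∉ C1x.support := ((Walk.cons_isPath_iff _ _).1 hC1pc).2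
  have hC1xlen : C1.length = C1x.length + 1 := by rw [hC1eq, Walk.length_cons]
  have hy2 : s(v, y) ∈ C1x.edges := by
    have h0 := hy
    rw [hC1eq, Walk.edges_cons] at h0
    rcases List.mem_cons.1 h0 with heq | h2
    · exfalso
      rw [Sym2.eq_iff] at heq
      rcases heq with ⟨h1, -⟩ | ⟨h1, -⟩
      · exact huv h1.symm
      · exact hxv h1.symm
    · exact h2
  have hy3 : s(v, y) ∈ C1x.reverse.edges := by
    rw [Walk.edges_reverse, List.mem_reverse]; exact hy2
  obtain ⟨h_vy, M, hMeq⟩ := (hC1xp.reverse).first_edge_decomp hy3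
  have hMrevc : (Walk.cons h_vy M).IsPath := by rw [← hMeq]; exact hC1xp.reverse
  have hMp : M.IsPath := hMrevc.of_cons
  have hvM : v ∉ M.support := ((Walk.cons_isPath_iff _ _).1 hMrevc).2
  set mid := M.reverse with hmiddef
  have hmidp : mid.IsPath := hMp.reverse
  have hmidlen : mid.length + 2 = C1.length := by
    have h1 : C1x.reverse.length = M.length + 1 := by rw [hMeq, Walk.length_cons]
    rw [Walk.length_reverse] at h1
    have h2 : mid.length = M.length := Walk.length_reverse M
    omega
  have hmide : ∀ e ∈ mid.edges, e ∈ C1.edges := by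
    intro e he
    rw [hmiddef, Walk.edges_reverse, List.mem_reverse] at he
    have h1 : e ∈ C1x.reverse.edges := by
      rw [hMeq, Walk.edges_cons]; exact List.mem_cons.2 (Or.inr he)
    rw [Walk.edges_reverse, List.mem_reverse] at h1
    rw [hC1eq, Walk.edges_cons]; exact List.mem_cons.2 (Or.inr h1)
  have hmidec : ∀ e ∈ mid.edges, e ∈ c.edges := fun e he => hC1e e (hmide e he)
  have humid : u ∉ mid.support := by
    intro h
    apply huC1x
    rw [hmiddef, Walk.support_reverse, List.mem_reverse] at h
    have h2 : u ∈ C1x.reverse.support := by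
      rw [hMeq, Walk.support_cons]; exact List.mem_cons.2 (Or.inr h)
    rwa [Walk.support_reverse, List.mem_reverse] at h2
  have hvmid : v ∉ mid.support := by
    intro h
    apply hvM
    rwa [hmiddef, Walk.support_reverse, List.mem_reverse] at h
  have hxC1 : x ∈ C1.support := by
    rw [hC1eq, Walk.support_cons]; exact List.mem_cons.2 (Or.inr C1x.start_mem_support)
  have hyC1 : y ∈ C1.support := C1.mem_support_of_mem_edges'' hy (Sym2.mem_mk_right _ _)
  -- the two arcs of c between u and v are C1 and C2
  obtain ⟨Ac, Bc, hAcp, hBcp, hAce, hBce, hABsum, hABint, hABuniq⟩ := hcyc.arcs hu hv huv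
  have hC1cl := hABuniq C1 hC1p hC1e
  have hC2cl := hABuniq C2 hC2p hC2e
  have hC2len1 : 1 ≤ C2.length := by
    rcases Nat.eq_zero_or_pos C2.length with h0 | h0
    · exact absurd (Walk.eq_of_length_eq_zero h0) huv
    · exact h0
  have hC1ne2 : C1 ≠ C2 := by
    intro hEq
    have hsub : ∀ e ∈ c.edges, e ∈ C1.edges := by
      intro e he
      rcases hcov e he with h | h
      · exact h
      · rw [hEq]; exact h
    have h1 : c.edges.length ≤ C1.edges.length := by
      have hnd : c.edges.Nodup := hcyc.isCircuit.isTrail.edges_nodup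
      calc c.edges.length = c.edges.toFinset.card := (List.toFinset_card_of_nodup hnd).symm
        _ ≤ C1.edges.toFinset.card := Finset.card_le_card
            (fun e he => List.mem_toFinset.2 (hsub e (List.mem_toFinset.1 he)))
        _ ≤ C1.edges.length := C1.edges.toFinset_card_le
    rw [Walk.length_edges, Walk.length_edges] at h1
    omega
  have hsupInt : ∀ z, z ∈ C1.support → z ∈ C2.support → z = u ∨ z = v := by
    intro z h1 h2
    rcases hC1cl with rfl | rfl <;> rcases hC2cl with h3 | h3
    · exact absurd h3.symm hC1ne2
    · rw [h3] at h2; exact hABint z h1 h2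
    · rw [h3] at h2; exact hABint z h2 h1
    · exact absurd h3.symm hC1ne2
  have harcUniq : ∀ D : G.Walk u v, D.IsPath → (∀ e ∈ D.edges, e ∈ c.edges) →
      D = C1 ∨ D = C2 := by
    intro D hDp hDe
    rcases hABuniq D hDp hDe with rfl | rfl
    · rcases hC1cl with h1 | h1
      · exact Or.inl h1.symm
      · rcases hC2cl with h2 | h2
        · exact Or.inr h2.symm
        · exact absurd (h1.trans h2.symm) hC1ne2
    · rcases hC2cl with h2 | h2
      · rcases hC1cl with h1 | h1
        · exact absurd (h1.trans h2.symm) hC1ne2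
        · exact Or.inl h1.symm
      · exact Or.inr h2.symm
  have hxC2 : x ∉ C2.support := by
    intro h
    rcases hsupInt x hxC1 h with h1 | h1
    · exact hxu h1
    · exact hxv h1
  have hyC2 : y ∉ C2.support := by
    intro h
    rcases hsupInt y hyC1 h with h1 | h1
    · exact hyu h1
    · exact hyv h1
  have hdC : cycleDist G c u v = C1.length := by
    apply le_antisymm
    · exact Nat.sInf_le ⟨C1, ⟨hC1p, hC1e⟩, rfl⟩
    · have hne : {n' | ∃ D : G.Walk u v, IsPathOf G c D ∧ D.length = n'}.Nonempty :=
        ⟨C1.length, C1, ⟨hC1p, hC1e⟩, rfl⟩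
      apply le_csInf hne
      rintro m ⟨D, ⟨hDp, hDe⟩, rfl⟩
      rcases harcUniq D hDp hDe with rfl | rfl
      · exact le_rfl
      · exact hle
  have cdArc : ∀ {s t : V}, s ∈ c.support → t ∈ c.support → s ≠ t → ∀ (W0 : G.Walk s t),
      W0.IsPath → (∀ e ∈ W0.edges, e ∈ c.edges) →
      cycleDist G c s t ≤ W0.length ∧
        (cycleDist G c s t = W0.length ∨ cycleDist G c s t + W0.length = c.length) := by
    intro s t hs ht hst W0 hW0p hW0e
    obtain ⟨A2, B2, pA2, pB2, eA2, eB2, hsum2, -, huniq2⟩ := hcyc.arcs hs ht hst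
    have h1 : cycleDist G c s t ≤ W0.length := Nat.sInf_le ⟨W0, ⟨hW0p, hW0e⟩, rfl⟩
    refine ⟨h1, ?_⟩
    have hne : {n' | ∃ D : G.Walk s t, IsPathOf G c D ∧ D.length = n'}.Nonempty :=
      ⟨W0.length, W0, ⟨hW0p, hW0e⟩, rfl⟩
    obtain ⟨D, ⟨hDp, hDe⟩, hDl⟩ := Nat.sInf_mem hne
    have hcd : cycleDist G c s t = D.length := hDl.symm
    rcases huniq2 D hDp hDe with rfl | rfl
    · rcases huniq2 W0 hW0p hW0e with h2 | h2
      · left; rw [hcd, h2]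
      · right; rw [hcd, h2]; exact hsum2
    · rcases huniq2 W0 hW0p hW0e with h2 | h2
      · right; rw [hcd, h2]; omega
      · left; rw [hcd, h2]
  have hpd' : P.length ≤ C1.length := by rw [hdC] at hpd; exact hpd
  have hsh1' : C1.length - 1 ≤ P.length := by rw [hdC] at hsh1; exact hsh1
  -- `P` has length `C1.length - 1`
  have hpa : P.length + 1 = C1.length := by
    obtain ⟨rH, wH, ⟨⟨hHcyc, hHind⟩, hH4⟩, hHsupp⟩ := hsh2 C1 C2 harc hle
    have hsubP : ∀ z ∈ P.support, z ∈ wH.support := by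
      intro z hz
      have h0 : z ∈ suppSet wH := by rw [hHsupp]; exact Or.inl hz
      exact h0
    have hsubC2 : ∀ z ∈ C2.support, z ∈ wH.support := by
      intro z hz
      have h0 : z ∈ suppSet wH := by rw [hHsupp]; exact Or.inr hz
      exact h0
    have huH : u ∈ wH.support := hsubP u P.start_mem_support
    have hvH : v ∈ wH.support := hsubP v P.end_mem_support
    have hPeH : ∀ e ∈ P.edges, e ∈ wH.edges := edges_subset_of_induced hHind P hsubP
    have hC2eH : ∀ e ∈ C2.edges, e ∈ wH.edges := edges_subset_of_induced hHind C2 hsubC2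
    obtain ⟨AH, BH, pAH, pBH, eAH, eBH, hsumH, -, huniqH⟩ := hHcyc.arcs huH hvH huv
    have hPne : P ≠ C2 := by
      intro hEq
      have h0 : P.length = C2.length := by rw [hEq]
      omega
    have hHlen : P.length + C2.length = wH.length := by
      rcases huniqH P hPpath hPeH with rfl | rfl <;>
        rcases huniqH C2 hC2p hC2eH with h2 | h2
      · exact absurd h2.symm hPne
      · rw [h2]; exact hsumH
      · rw [h2]; omega
      · exact absurd h2.symm hPne
    by_cases hev : Even wH.length
    · exfalso
      apply hPbad
      refine ⟨C2, ⟨hC2p, hC2e⟩, rH, wH, ⟨⟨⟨⟨hHcyc, hHind⟩, hH4⟩, hev⟩, ?_⟩, hHsupp⟩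
      intro y' w' hw'
      have h1 := hmin y' w' hw'
      omega
    · have h2 : ¬ Even (P.length + C2.length) := by rw [hHlen]; exact hev
      rw [Nat.even_iff] at h2
      have he1 := Nat.even_iff.1 heven
      omega
  have ha3 : 3 ≤ C1.length := by omega
  -- the core distance lemma
  have core : ∀ (s t : V), s ∈ c.support → t ∈ c.support → ∀ R : G.Walk s t,
      min (cycleDist G c s t) (C1.length - 1) ≤ R.length := by
    intro s t hs ht R
    by_contra hcon
    push_neg at hcon
    rw [lt_min_iff] at hcon
    obtain ⟨hcon1, hcon2⟩ := hcon
    have hbp : R.bypass.IsPath := R.bypass_isPath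
    have hbl : R.bypass.length ≤ R.length := R.length_bypass_le
    by_cases hst : s = t
    · subst hst
      have h0 : cycleDist G c s s ≤ 0 := Nat.sInf_le ⟨Walk.nil, ⟨Walk.IsPath.nil, by simp⟩, rfl⟩
      omega
    by_cases hadj : G.Adj s t
    · have hedge : s(s, t) ∈ c.edges := hind s t hs ht hadj
      have h1 : cycleDist G c s t ≤ 1 := by
        apply Nat.sInf_le
        refine ⟨Walk.cons hadj Walk.nil, ⟨?_, ?_⟩, by simp⟩
        · apply Walk.IsPath.mk'
          simp [hst]
        · intro e he
          simp only [Walk.edges_cons, Walk.edges_nil, List.mem_singleton] at he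
          rw [he]; exact hedge
      have h0 : R.length = 0 := by omega
      exact hst (Walk.eq_of_length_eq_zero h0)
    have hR2 : 2 ≤ R.bypass.length := by
      rcases Nat.lt_or_ge R.bypass.length 2 with hlt | hge
      · exfalso
        have h01 : R.bypass.length = 0 ∨ R.bypass.length = 1 := by omega
        rcases h01 with h0 | h1
        · exact hst (Walk.eq_of_length_eq_zero h0)
        · apply hadj
          have hadj01 := R.bypass.adj_getVert_succ (by omega : 0 < R.bypass.length)
          rw [Walk.getVert_zero] at hadj01
          have h2 := R.bypass.getVert_length
          rw [h1] at h2
          rwa [h2] at hadj01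
      · exact hge
    have hsetup : ShortcutSetup G c R.bypass := ⟨hbp, hst, hadj, hs, ht⟩
    have hshort : CShortcut G c R.bypass := by
      refine ⟨hR2, by omega, by omega⟩
    by_cases hgood : CGood G c R.bypass
    · obtain ⟨Q', ⟨hQ'p, hQ'e⟩, rE, wE, hwE, hwEsupp⟩ := hgood
      have hwEcyc : wE.IsCycle := hwE.1.1.1.1
      have hwElen2 : c.length ≤ wE.length := hmin rE wE hwE.1
      have hcard : (suppSet R.bypass ∪ suppSet Q').ncard = wE.length := by
        rw [← hwEsupp, ncard_suppSet_cycle hwEcyc]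
      have hub := ncard_union_suppSet_le R.bypass Q' hst
      obtain ⟨A2, B2, pA2, pB2, eA2, eB2, hsum2, -, huniq2⟩ := hcyc.arcs hs ht hst
      have hcdA : cycleDist G c s t ≤ A2.length := Nat.sInf_le ⟨A2, ⟨pA2, eA2⟩, rfl⟩
      have hcdB : cycleDist G c s t ≤ B2.length := Nat.sInf_le ⟨B2, ⟨pB2, eB2⟩, rfl⟩
      rcases huniq2 Q' hQ'p hQ'e with rfl | rfl
      · omega
      · omega
    · have hcmp := hwmin s t R.bypass hsetup hshort hgood
      rcases hcmp with h1 | ⟨h1, -⟩ <;> omega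
  -- now the shortest x-y path
  intro Pxy hPxy
  obtain ⟨hQp, hQlow⟩ := hPxy
  have hxy : x ≠ y := by
    rintro rfl
    have h1 := hmidp.loop_eq_nil
    rw [h1] at hmidlen
    simp only [Walk.length_nil, Nat.zero_add] at hmidlen
    omega
  have hq_ub : Pxy.length ≤ C1.length - 2 := by
    have h0 := hQlow mid
    omega
  have hcdxy := cdArc hxsup hysup hxy mid hmidp hmidec
  have hqeq : Pxy.length + 2 = C1.length := by
    have h1 := core x y hxsup hysup Pxy
    have h2 : C1.length - 2 ≤ cycleDist G c x y := by
      rcases hcdxy.2 with h | h <;> omega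
    have h3 : C1.length - 2 ≤ min (cycleDist G c x y) (C1.length - 1) := le_min h2 (by omega)
    omega
  refine ⟨hqeq, ?_⟩
  -- ===== Part B =====
  -- arc u→y along C1 and x→v along C1
  have hUYp : (Walk.cons h_ux mid).IsPath := by
    rw [Walk.cons_isPath_iff]; exact ⟨hmidp, humid⟩
  have hUYe : ∀ e ∈ (Walk.cons h_ux mid).edges, e ∈ c.edges := by
    intro e he
    rw [Walk.edges_cons] at he
    rcases List.mem_cons.1 he with rfl | he'
    · exact hxc
    · exact hmidec e he'
  have hcduy : C1.length - 1 ≤ cycleDist G c u y := by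
    have h0 := cdArc hu hysup hyu.symm _ hUYp hUYe
    rw [Walk.length_cons] at h0
    rcases h0.2 with h | h <;> omega
  have hXVp : (mid.concat hadj_yv).IsPath := hmidp.concat' hadj_yv hvmid
  have hXVe : ∀ e ∈ (mid.concat hadj_yv).edges, e ∈ c.edges := by
    intro e he
    rw [Walk.edges_concat, List.concat_eq_append, List.mem_append] at he
    rcases he with he' | he'
    · exact hmidec e he'
    · rw [List.mem_singleton] at he'
      subst he'
      rw [Sym2.eq_swap]; exact hyc
  have hcdxv : C1.length - 1 ≤ cycleDist G c x v := by
    have h0 := cdArc hxsup hv hxv _ hXVp hXVe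
    rw [Walk.length_concat] at h0
    rcases h0.2 with h | h <;> omega
  -- u and v are not on Pxy
  have huQ : u ∉ Pxy.support := by
    intro h
    have hW := core u y hu hysup (Pxy.dropUntil u h)
    have hlen := Pxy.length_takeUntil_add_dropUntil h
    have h3 : C1.length - 1 ≤ min (cycleDist G c u y) (C1.length - 1) := le_min hcduy le_rfl
    omega
  have hvQ : v ∉ Pxy.support := by
    intro h
    have hW := core x v hxsup hv (Pxy.takeUntil v h)
    have hlen := Pxy.length_takeUntil_add_dropUntil h
    have h3 : C1.length - 1 ≤ min (cycleDist G c x v) (C1.length - 1) := le_min hcdxv le_rfl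
    omega
  -- the only neighbor of u (resp. v) on Pxy is x (resp. y)
  have hE1 : ∀ z (hz : z ∈ Pxy.support), G.Adj u z → z = x := by
    intro z hz hadjz
    by_contra hzx
    have hW := core u y hu hysup (Walk.cons hadjz (Pxy.dropUntil z hz))
    have hlen := Pxy.length_takeUntil_add_dropUntil hz
    have hk1 : 1 ≤ (Pxy.takeUntil z hz).length := by
      rcases Nat.eq_zero_or_pos (Pxy.takeUntil z hz).length with h0 | h0
      · exact absurd (Walk.eq_of_length_eq_zero h0).symm hzx
      · exact h0
    have h3 : C1.length - 1 ≤ min (cycleDist G c u y) (C1.length - 1) := le_min hcduy le_rfl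
    rw [Walk.length_cons] at hW
    omega
  have hE2 : ∀ z (hz : z ∈ Pxy.support), G.Adj v z → z = y := by
    intro z hz hadjz
    have hW := core x v hxsup hv ((Pxy.takeUntil z hz).concat hadjz.symm)
    rw [Walk.length_concat] at hW
    have hlen := Pxy.length_takeUntil_add_dropUntil hz
    have h3 : C1.length - 1 ≤ min (cycleDist G c x v) (C1.length - 1) := le_min hcdxv le_rfl
    have hkq : (Pxy.takeUntil z hz).length = Pxy.length := by omega
    have hgv := Pxy.getVert_takeUntil' hz
    rw [hkq, Pxy.getVert_length] at hgv
    exact hgv.symm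
  -- supports of C2 lie on c
  have hC2sub : ∀ z ∈ C2.support, z ∈ c.support := by
    intro z hz
    obtain ⟨e, he, hze⟩ := C2.exists_edge_of_mem_support (by omega) hz
    exact c.mem_support_of_mem_edges'' (hC2e e he) hze
  -- Pxy and C2 are vertex disjoint
  have hE3 : ∀ z, z ∈ Pxy.support → z ∈ C2.support → False := by
    intro z hzQ hzC2
    have hzu : z ≠ u := fun h => huQ (h ▸ hzQ)
    have hzv : z ≠ v := fun h => hvQ (h ▸ hzQ)
    have hzx : z ≠ x := fun h => hxC2 (h ▸ hzC2)
    have hzy : z ≠ y := fun h => hyC2 (h ▸ hzC2)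
    have hzc : z ∈ c.support := hC2sub z hzC2
    have hm := C2.length_takeUntil_add_dropUntil hzC2
    have hk := Pxy.length_takeUntil_add_dropUntil hzQ
    have hm1 : 1 ≤ (C2.takeUntil z hzC2).length := by
      rcases Nat.eq_zero_or_pos (C2.takeUntil z hzC2).length with h0 | h0
      · exact absurd (Walk.eq_of_length_eq_zero h0).symm hzu
      · exact h0
    have hmb : 1 ≤ (C2.dropUntil z hzC2).length := by
      rcases Nat.eq_zero_or_pos (C2.dropUntil z hzC2).length with h0 | h0
      · exact absurd (Walk.eq_of_length_eq_zero h0) hzv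
      · exact h0
    have hk1 : 1 ≤ (Pxy.takeUntil z hzQ).length := by
      rcases Nat.eq_zero_or_pos (Pxy.takeUntil z hzQ).length with h0 | h0
      · exact absurd (Walk.eq_of_length_eq_zero h0).symm hzx
      · exact h0
    have hkq : (Pxy.takeUntil z hzQ).length ≠ Pxy.length := by
      intro h0
      have hgv := Pxy.getVert_takeUntil' hzQ
      rw [h0, Pxy.getVert_length] at hgv
      exact hzy hgv.symm
    have hXZp : (Walk.cons hadj_ux.symm (C2.takeUntil z hzC2)).IsPath := by
      rw [Walk.cons_isPath_iff]
      exact ⟨hC2p.takeUntil hzC2, fun h => hxC2 (C2.support_takeUntil_subset hzC2 h)⟩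
    have hXZe : ∀ e ∈ (Walk.cons hadj_ux.symm (C2.takeUntil z hzC2)).edges, e ∈ c.edges := by
      intro e he
      rw [Walk.edges_cons] at he
      rcases List.mem_cons.1 he with rfl | he'
      · rw [Sym2.eq_swap]; exact hxc
      · exact hC2e e (C2.edges_takeUntil_subset hzC2 he')
    have hcdxz := cdArc hxsup hzc hzx.symm _ hXZp hXZe
    rw [Walk.length_cons] at hcdxz
    have hWxz := core x z hxsup hzc (Pxy.takeUntil z hzQ)
    have hZYp : ((C2.dropUntil z hzC2).concat hadj_vy).IsPath :=
      (hC2p.dropUntil hzC2).concat' hadj_vy (fun h => hyC2 (C2.support_dropUntil_subset hzC2 h))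
    have hZYe : ∀ e ∈ ((C2.dropUntil z hzC2).concat hadj_vy).edges, e ∈ c.edges := by
      intro e he
      rw [Walk.edges_concat, List.concat_eq_append, List.mem_append] at he
      rcases he with he' | he'
      · exact hC2e e (C2.edges_dropUntil_subset hzC2 he')
      · rw [List.mem_singleton] at he'
        subst he'
        exact hyc
    have hcdzy := cdArc hzc hysup hzy _ hZYp hZYe
    rw [Walk.length_concat] at hcdzy
    have hWzy := core z y hzc hysup (Pxy.dropUntil z hzQ)
    have hcon1 : cycleDist G c x z ≤ (Pxy.takeUntil z hzQ).length := by
      rcases min_le_iff.1 hWxz with h | h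
      · exact h
      · omega
    have hcon2 : cycleDist G c z y ≤ (Pxy.dropUntil z hzQ).length := by
      rcases min_le_iff.1 hWzy with h | h
      · exact h
      · omega
    rcases hcdxz.2 with hA | hA <;> rcases hcdzy.2 with hB | hB <;> omega
  -- Pxy is an induced path
  have hQind : ∀ z w', z ∈ Pxy.support → w' ∈ Pxy.support → G.Adj z w' → s(z, w') ∈ Pxy.edges := by
    have claim : ∀ z w' (hz : z ∈ Pxy.support) (hw : w' ∈ Pxy.support), G.Adj z w' →
        (Pxy.takeUntil z hz).length < (Pxy.takeUntil w' hw).length → s(z, w') ∈ Pxy.edges := by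
      intro z w' hz hw hzw hij
      have hk := Pxy.length_takeUntil_add_dropUntil hz
      have hj := Pxy.length_takeUntil_add_dropUntil hw
      have hW := hQlow ((Pxy.takeUntil z hz).append (Walk.cons hzw (Pxy.dropUntil w' hw)))
      rw [Walk.length_append, Walk.length_cons] at hW
      have hj1 : (Pxy.takeUntil w' hw).length = (Pxy.takeUntil z hz).length + 1 := by omega
      have hgz := Pxy.getVert_takeUntil' hz
      have hgw := Pxy.getVert_takeUntil' hw
      rw [hj1] at hgw
      have hedge := Pxy.edge_getVert_mem (i := (Pxy.takeUntil z hz).length) (by omega)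
      rw [hgz, hgw] at hedge
      exact hedge
    intro z w' hz hw hzw
    rcases Nat.lt_trichotomy (Pxy.takeUntil z hz).length (Pxy.takeUntil w' hw).length
      with h | h | h
    · exact claim z w' hz hw hzw h
    · exfalso
      have hgz := Pxy.getVert_takeUntil' hz
      have hgw := Pxy.getVert_takeUntil' hw
      rw [h] at hgz
      exact G.ne_of_adj hzw (hgz.symm.trans hgw)
    · have h0 := claim w' z hw hz hzw.symm h
      rwa [Sym2.eq_swap] at h0
  -- crossing edges between Pxy and C2
  have hcross : ∀ z w', z ∈ Pxy.support → w' ∈ C2.support → G.Adj z w' →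
      (w' = u ∧ z = x) ∨ (w' = v ∧ z = y) := by
    intro z w' hzQ hwC2 hzw
    by_cases hwu : w' = u
    · subst hwu; exact Or.inl ⟨rfl, hE1 z hzQ hzw.symm⟩
    by_cases hwv : w' = v
    · subst hwv; exact Or.inr ⟨rfl, hE2 z hzQ hzw.symm⟩
    exfalso
    have hwc : w' ∈ c.support := hC2sub w' hwC2
    by_cases hzx : z = x
    · subst hzx
      have hce : s(z, w') ∈ c.edges := hind z w' hxsup hwc hzw
      rcases hcov _ hce with h1 | h1
      · have hb1 : w' ∈ C1.support := C1.snd_mem_support_of_mem_edges h1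
        rcases hsupInt w' hb1 hwC2 with h2 | h2
        · exact hwu h2
        · exact hwv h2
      · exact hxC2 (C2.fst_mem_support_of_mem_edges h1)
    by_cases hzy : z = y
    · subst hzy
      have hce : s(z, w') ∈ c.edges := hind z w' hysup hwc hzw
      rcases hcov _ hce with h1 | h1
      · have hb1 : w' ∈ C1.support := C1.snd_mem_support_of_mem_edges h1
        rcases hsupInt w' hb1 hwC2 with h2 | h2
        · exact hwu h2
        · exact hwv h2
      · exact hyC2 (C2.fst_mem_support_of_mem_edges h1)
    -- interior-interior crossing edge: distance contradiction
    have hm := C2.length_takeUntil_add_dropUntil hwC2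
    have hk := Pxy.length_takeUntil_add_dropUntil hzQ
    have hm1 : 1 ≤ (C2.takeUntil w' hwC2).length := by
      rcases Nat.eq_zero_or_pos (C2.takeUntil w' hwC2).length with h0 | h0
      · exact absurd (Walk.eq_of_length_eq_zero h0).symm hwu
      · exact h0
    have hmb : 1 ≤ (C2.dropUntil w' hwC2).length := by
      rcases Nat.eq_zero_or_pos (C2.dropUntil w' hwC2).length with h0 | h0
      · exact absurd (Walk.eq_of_length_eq_zero h0) hwv
      · exact h0
    have hk1 : 1 ≤ (Pxy.takeUntil z hzQ).length := by
      rcases Nat.eq_zero_or_pos (Pxy.takeUntil z hzQ).length with h0 | h0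
      · exact absurd (Walk.eq_of_length_eq_zero h0).symm hzx
      · exact h0
    have hkq : (Pxy.takeUntil z hzQ).length ≠ Pxy.length := by
      intro h0
      have hgv := Pxy.getVert_takeUntil' hzQ
      rw [h0, Pxy.getVert_length] at hgv
      exact hzy hgv.symm
    have hxw : x ≠ w' := fun h => hxC2 (h ▸ hwC2)
    have hyw : y ≠ w' := fun h => hyC2 (h ▸ hwC2)
    -- walk x → z → w'
    have hWxw := core x w' hxsup hwc ((Pxy.takeUntil z hzQ).concat hzw)
    rw [Walk.length_concat] at hWxw
    -- arc x → u → w'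
    have hXWp : (Walk.cons hadj_ux.symm (C2.takeUntil w' hwC2)).IsPath := by
      rw [Walk.cons_isPath_iff]
      exact ⟨hC2p.takeUntil hwC2, fun h => hxC2 (C2.support_takeUntil_subset hwC2 h)⟩
    have hXWe : ∀ e ∈ (Walk.cons hadj_ux.symm (C2.takeUntil w' hwC2)).edges, e ∈ c.edges := by
      intro e he
      rw [Walk.edges_cons] at he
      rcases List.mem_cons.1 he with rfl | he'
      · rw [Sym2.eq_swap]; exact hxc
      · exact hC2e e (C2.edges_takeUntil_subset hwC2 he')
    have hcdxw := cdArc hxsup hwc hxw _ hXWp hXWe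
    rw [Walk.length_cons] at hcdxw
    -- walk w' → z → y
    have hWwy := core w' y hwc hysup (Walk.cons hzw.symm (Pxy.dropUntil z hzQ))
    rw [Walk.length_cons] at hWwy
    -- arc w' → v → y
    have hWYp : ((C2.dropUntil w' hwC2).concat hadj_vy).IsPath :=
      (hC2p.dropUntil hwC2).concat' hadj_vy (fun h => hyC2 (C2.support_dropUntil_subset hwC2 h))
    have hWYe : ∀ e ∈ ((C2.dropUntil w' hwC2).concat hadj_vy).edges, e ∈ c.edges := by
      intro e he
      rw [Walk.edges_concat, List.concat_eq_append, List.mem_append] at he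
      rcases he with he' | he'
      · exact hC2e e (C2.edges_dropUntil_subset hwC2 he')
      · rw [List.mem_singleton] at he'
        subst he'
        exact hyc
    have hcdwy := cdArc hwc hysup (fun h => hyw h.symm) _ hWYp hWYe
    rw [Walk.length_concat] at hcdwy
    have hcon1 : cycleDist G c x w' ≤ (Pxy.takeUntil z hzQ).length + 1 := by
      rcases min_le_iff.1 hWxw with h | h
      · exact h
      · omega
    have hcon2 : cycleDist G c w' y ≤ (Pxy.dropUntil z hzQ).length + 1 := by
      rcases min_le_iff.1 hWwy with h | h
      · exact h
      · omega
    rcases hcdxw.2 with hA | hA <;> rcases hcdwy.2 with hB | hB <;> omega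
  -- assemble the new hole D
  have hDsup : (Walk.cons hadj_ux (Pxy.append (Walk.cons hadj_yv C2.reverse))).support
      = u :: (Pxy.support ++ C2.reverse.support) := by
    rw [Walk.support_cons, Walk.support_append, Walk.support_cons, List.tail_cons]
  have hDedges : (Walk.cons hadj_ux (Pxy.append (Walk.cons hadj_yv C2.reverse))).edges
      = s(u, x) :: (Pxy.edges ++ (s(y, v) :: C2.reverse.edges)) := by
    rw [Walk.edges_cons, Walk.edges_append, Walk.edges_cons]
  set D := Walk.cons hadj_ux (Pxy.append (Walk.cons hadj_yv C2.reverse)) with hDdef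
  have hDlen : D.length = c.length := by
    rw [hDdef, Walk.length_cons, Walk.length_append, Walk.length_cons, Walk.length_reverse]
    omega
  have hDmem : ∀ z, z ∈ D.support ↔ (z ∈ Pxy.support ∨ z ∈ C2.support) := by
    intro z
    rw [hDsup]
    simp only [List.mem_cons, List.mem_append, Walk.support_reverse, List.mem_reverse]
    constructor
    · rintro (rfl | h | h)
      · exact Or.inr C2.start_mem_support
      · exact Or.inl h
      · exact Or.inr h
    · rintro (h | h)
      · exact Or.inr (Or.inl h)
      · exact Or.inr (Or.inr h)
  have hsuxQ : s(u, x) ∉ Pxy.edges := fun h => huQ (Pxy.fst_mem_support_of_mem_edges h)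
  have hsuxC2 : s(u, x) ∉ C2.reverse.edges := by
    intro h
    rw [Walk.edges_reverse, List.mem_reverse] at h
    exact hxC2 (C2.snd_mem_support_of_mem_edges h)
  have hsyvQ : s(y, v) ∉ Pxy.edges := fun h => hvQ (Pxy.snd_mem_support_of_mem_edges h)
  have hsyvC2 : s(y, v) ∉ C2.reverse.edges := by
    intro h
    rw [Walk.edges_reverse, List.mem_reverse] at h
    exact hyC2 (C2.fst_mem_support_of_mem_edges h)
  have hsne : s(u, x) ≠ s(y, v) := by
    intro h
    rw [Sym2.eq_iff] at h
    rcases h with ⟨h1, -⟩ | ⟨h1, -⟩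
    · exact hyu h1.symm
    · exact huv h1
  have hQC2e : ∀ e, e ∈ Pxy.edges → e ∈ C2.reverse.edges → False := by
    intro e
    induction e with
    | _ z1 z2 =>
      intro he he'
      rw [Walk.edges_reverse, List.mem_reverse] at he'
      exact hE3 z1 (Pxy.fst_mem_support_of_mem_edges he) (C2.fst_mem_support_of_mem_edges he')
  have hDtrail : D.edges.Nodup := by
    rw [hDdef] at *
    rw [hDedges]
    rw [List.nodup_cons, List.mem_append, List.mem_cons]
    refine ⟨?_, ?_⟩
    · push_neg
      exact ⟨hsuxQ, hsne, hsuxC2⟩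
    · rw [List.nodup_append']
      refine ⟨hQp.isTrail.edges_nodup, ?_, ?_⟩
      · rw [List.nodup_cons]
        refine ⟨hsyvC2, ?_⟩
        rw [Walk.edges_reverse]
        exact List.nodup_reverse.2 hC2p.isTrail.edges_nodup
      · intro e he he'
        rcases List.mem_cons.1 he' with rfl | he''
        · exact hsyvQ he
        · exact hQC2e e he he''
  have hDtailnd : D.support.tail.Nodup := by
    rw [hDdef, hDsup, List.tail_cons, List.nodup_append']
    refine ⟨hQp.support_nodup, ?_, ?_⟩
    · rw [Walk.support_reverse]
      exact List.nodup_reverse.2 hC2p.support_nodup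
    · intro z hz hz'
      rw [Walk.support_reverse, List.mem_reverse] at hz'
      exact hE3 z hz hz'
  have hDnnil : D ≠ Walk.nil := by
    intro h
    have h0 := congrArg Walk.length h
    rw [hDlen] at h0
    simp only [Walk.length_nil] at h0
    omega
  have hDcyc : D.IsCycle := ⟨⟨⟨hDtrail⟩, hDnnil⟩, hDtailnd⟩
  have hQeD : ∀ e ∈ Pxy.edges, e ∈ D.edges := by
    intro e he
    rw [hDdef, hDedges]
    exact List.mem_cons.2 (Or.inr (List.mem_append.2 (Or.inl he)))
  have hC2eD : ∀ e ∈ C2.edges, e ∈ D.edges := by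
    intro e he
    rw [hDdef, hDedges]
    refine List.mem_cons.2 (Or.inr (List.mem_append.2 (Or.inr (List.mem_cons.2 (Or.inr ?_)))))
    rw [Walk.edges_reverse, List.mem_reverse]
    exact he
  have huxD : s(u, x) ∈ D.edges := by
    rw [hDdef, hDedges]
    exact List.mem_cons_self
  have hyvD : s(y, v) ∈ D.edges := by
    rw [hDdef, hDedges]
    exact List.mem_cons.2 (Or.inr (List.mem_append.2 (Or.inr (List.mem_cons_self))))
  have hCC : ∀ a' b', a' ∈ C2.support → b' ∈ C2.support → G.Adj a' b' → s(a', b') ∈ C2.edges := by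
    intro a' b' ha hb hab
    have hce : s(a', b') ∈ c.edges := hind a' b' (hC2sub a' ha) (hC2sub b' hb) hab
    rcases hcov _ hce with h1 | h1
    · exfalso
      have ha1 : a' ∈ C1.support := C1.fst_mem_support_of_mem_edges h1
      have hb1 : b' ∈ C1.support := C1.snd_mem_support_of_mem_edges h1
      rcases hsupInt a' ha1 ha with rfl | rfl <;> rcases hsupInt b' hb1 hb with rfl | rfl
      · exact G.irrefl hab
      · exact hnadj hab
      · exact hnadj hab.symm
      · exact G.irrefl hab
    · exact h1
  have hDind : ∀ a' b' : V, a' ∈ D.support → b' ∈ D.support → G.Adj a' b' →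
      s(a', b') ∈ D.edges := by
    intro a' b' ha hb hab
    rw [hDmem] at ha hb
    rcases ha with haQ | haC <;> rcases hb with hbQ | hbC
    · exact hQeD _ (hQind a' b' haQ hbQ hab)
    · rcases hcross a' b' haQ hbC hab with ⟨rfl, rfl⟩ | ⟨rfl, rfl⟩
      · rw [Sym2.eq_swap]; exact huxD
      · exact hyvD
    · rcases hcross b' a' hbQ haC hab.symm with ⟨rfl, rfl⟩ | ⟨rfl, rfl⟩
      · exact huxD
      · rw [Sym2.eq_swap]; exact hyvD
    · exact hC2eD _ (hCC a' b' haC hbC hab)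
  have hDsuppSet : suppSet D = suppSet Pxy ∪ suppSet C2 := by
    ext z
    rw [Set.mem_union]
    exact hDmem z
  refine ⟨u, D, ⟨⟨⟨⟨hDcyc, hDind⟩, ?_⟩, ?_⟩, ?_⟩, hDsuppSet⟩
  · rw [hDlen]; exact h4len
  · rw [hDlen]; exact heven
  · intro y' w' hw'
    rw [hDlen]
    exact hmin y' w' hw'
end
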